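/- arXiv:1003.0501 — 7 statements merged into one kernel-verified Lean document; each statement's English description precedes it below -/
import Mathlib

section
/- Let n be an odd positive integer, w a primitive n-th root of unity in ℂ, and let l, k be integers with gcd(l,n)=gcd(k,n)=1. Then for all natural numbers a and integers b, ∏_{j=1}^{a} (z + w^{2l((2j-1)k + b)})/(1 + z·w^{2l((2j-1)k + b)}) = ∏_{j=1}^{ā} (z + w^{2l((2j-1)k + b)})/(1 + z·w^{2l((2j-1)k + b)}), where ā denotes the residue of a modulo n (0 ≤ ā ≤ n-1), for any z ∈ ℂ such that no denominator vanishes. -/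
open Finset

/-- Lemma 1 of the paper: the product
`∏_{j=1}^{a} (z + w^{2l((2j-1)k+b)})/(1 + z w^{2l((2j-1)k+b)})` depends on `a` only
modulo `n`, when `w` is a primitive `n`-th root of unity (`n` odd) and
`gcd(l,n) = gcd(k,n) = 1`. -/
theorem stmt0 (n : ℕ) (hodd : Odd n) (hpos : 0 < n) (w : ℂ) (hw : IsPrimitiveRoot w n)
    (l k : ℤ) (hl : Int.gcd l n = 1) (hk : Int.gcd k n = 1)
    (a : ℕ) (b : ℤ) (z : ℂ)
    (hz : ∀ j : ℤ, 1 + z * w ^ (2 * l * ((2 * j - 1) * k + b)) ≠ 0) :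
    ∏ j ∈ Finset.range a,
        (z + w ^ (2 * l * ((2 * ((j : ℤ) + 1) - 1) * k + b))) /
          (1 + z * w ^ (2 * l * ((2 * ((j : ℤ) + 1) - 1) * k + b)))
      = ∏ j ∈ Finset.range (a % n),
        (z + w ^ (2 * l * ((2 * ((j : ℤ) + 1) - 1) * k + b))) /
          (1 + z * w ^ (2 * l * ((2 * ((j : ℤ) + 1) - 1) * k + b))) := by
  haveI : NeZero n := ⟨hpos.ne'⟩
  have hw0 : w ≠ 0 := by
    intro h
    have := hw.pow_eq_one
    rw [h, zero_pow hpos.ne'] at this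
    exact zero_ne_one this
  have hpow1 : ∀ s : ℤ, (n : ℤ) ∣ s → w ^ s = 1 := fun s hs =>
    (hw.zpow_eq_one_iff_dvd s).mpr hs
  have hcong : ∀ s t : ℤ, (n : ℤ) ∣ s - t → w ^ s = w ^ t := by
    intro s t hst
    have h1 : w ^ s = w ^ (t + (s - t)) := by ring_nf
    rw [h1, zpow_add₀ hw0, hpow1 _ hst, mul_one]
  have h2 : IsCoprime (2 : ℤ) (n : ℤ) := by
    refine Nat.isCoprime_iff_coprime.mpr (Nat.prime_two.coprime_iff_not_dvd.mpr ?_)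
    obtain ⟨m, rfl⟩ := hodd
    omega
  have hlc : IsCoprime (l : ℤ) (n : ℤ) := Int.isCoprime_iff_gcd_eq_one.mpr hl
  have hkc : IsCoprime (k : ℤ) (n : ℤ) := Int.isCoprime_iff_gcd_eq_one.mpr hk
  have hco : IsCoprime ((4 * l * k : ℤ)) (n : ℤ) := by
    have h4 : (4 * l * k : ℤ) = 2 * 2 * l * k := by ring
    rw [h4]
    exact ((h2.mul_left h2).mul_left hlc).mul_left hkc
  -- surjectivity: every n-th root of unity is w^(4*l*k*j + c) for some j < n
  have hsurj : ∀ (c : ℤ) (ζ : ℂ), ζ ^ n = 1 →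
      ∃ j : ℕ, j < n ∧ w ^ (4 * l * k * (j : ℤ) + c) = ζ := by
    intro c ζ hζ
    obtain ⟨i, hi, rfl⟩ := hw.eq_pow_of_pow_eq_one hζ
    obtain ⟨x, y, hxy⟩ := hco
    set j0 : ℤ := x * ((i : ℤ) - c) with hj0
    have hn0 : (0 : ℤ) < n := by exact_mod_cast hpos
    have hnn : (0 : ℤ) ≤ j0 % n := Int.emod_nonneg j0 hn0.ne'
    refine ⟨(j0 % n).toNat, ?_, ?_⟩
    · have := Int.emod_lt_of_pos j0 hn0
      omega
    · have hj' : (((j0 % n).toNat : ℕ) : ℤ) = j0 - n * (j0 / n) := by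
        rw [Int.toNat_of_nonneg hnn, Int.emod_def]
      rw [← zpow_natCast w i]
      apply hcong
      rw [hj', hj0]
      exact ⟨-(y * ((i : ℤ) - c)) - 4 * l * k * ((j0 / n)),
        by linear_combination ((i : ℤ) - c) * hxy⟩
  -- injectivity of j ↦ w^(4*l*k*j + c) on range n
  have hinj : ∀ (c : ℤ) (j1 j2 : ℕ), j1 < n → j2 < n →
      w ^ (4 * l * k * (j1 : ℤ) + c) = w ^ (4 * l * k * (j2 : ℤ) + c) → j1 = j2 := by
    intro c j1 j2 h1 h2' heq
    have hd : w ^ (4 * l * k * ((j1 : ℤ) - j2)) = 1 := by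
      have he : (4 * l * k * ((j1 : ℤ) - j2)) =
          (4 * l * k * (j1 : ℤ) + c) - (4 * l * k * (j2 : ℤ) + c) := by ring
      rw [he, zpow_sub₀ hw0, heq, div_self (zpow_ne_zero _ hw0)]
    have hdvd : (n : ℤ) ∣ 4 * l * k * ((j1 : ℤ) - j2) :=
      (hw.zpow_eq_one_iff_dvd _).mp hd
    have hdd : (n : ℤ) ∣ ((j1 : ℤ) - j2) := hco.symm.dvd_of_dvd_mul_left hdvd
    have := Int.eq_zero_of_abs_lt_dvd hdd (by rw [abs_lt]; omega)
    omega
  -- the product over a full period, translated to nth roots of unity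
  have hper : ∀ c : ℤ,
      ∏ j ∈ Finset.range n,
          ((z + w ^ (4 * l * k * (j : ℤ) + c)) / (1 + z * w ^ (4 * l * k * (j : ℤ) + c)))
        = ∏ ζ ∈ Polynomial.nthRootsFinset n (1 : ℂ), ((z + ζ) / (1 + z * ζ)) := by
    intro c
    refine Finset.prod_bij (fun j _ => w ^ (4 * l * k * (j : ℤ) + c)) ?_ ?_ ?_ ?_
    · intro j hj
      rw [Polynomial.mem_nthRootsFinset hpos, ← zpow_natCast, ← zpow_mul]
      exact hpow1 _ ⟨4 * l * k * (j : ℤ) + c, by ring⟩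
    · intro j1 h1 j2 h2'
      exact hinj c j1 j2 (Finset.mem_range.mp h1) (Finset.mem_range.mp h2')
    · intro ζ hζ
      obtain ⟨j, hj, hje⟩ := hsurj c ζ ((Polynomial.mem_nthRootsFinset hpos (1 : ℂ)).mp hζ)
      exact ⟨j, Finset.mem_range.mpr hj, hje⟩
    · intro j hj; rfl
  -- each denominator factor is nonzero
  have hfac : ∀ ζ ∈ Polynomial.nthRootsFinset n (1 : ℂ), 1 + z * ζ ≠ 0 := by
    intro ζ hζ
    obtain ⟨j, hj, rfl⟩ := hsurj (2 * l * (k + b)) ζ ((Polynomial.mem_nthRootsFinset hpos (1 : ℂ)).mp hζ)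
    have he : 4 * l * k * (j : ℤ) + 2 * l * (k + b) = 2 * l * ((2 * ((j : ℤ) + 1) - 1) * k + b) := by
      ring
    rw [he]
    exact hz ((j : ℤ) + 1)
  -- the denominator product is nonzero
  have hden : ∏ ζ ∈ Polynomial.nthRootsFinset n (1 : ℂ), (1 + z * ζ) = 1 + z ^ n := by
    have := IsPrimitiveRoot.pow_sub_pow_eq_prod_sub_mul (1 : ℂ) (-z) hpos hw
    rw [one_pow, Odd.neg_pow hodd] at this
    calc ∏ ζ ∈ Polynomial.nthRootsFinset n (1 : ℂ), (1 + z * ζ)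
        = ∏ ζ ∈ Polynomial.nthRootsFinset n (1 : ℂ), (1 - ζ * -z) := by
          refine Finset.prod_congr rfl fun ζ _ => by ring
      _ = 1 - -z ^ n := this.symm
      _ = 1 + z ^ n := by ring
  have hnum : ∏ ζ ∈ Polynomial.nthRootsFinset n (1 : ℂ), (z + ζ) = z ^ n + 1 := by
    have := IsPrimitiveRoot.pow_sub_pow_eq_prod_sub_mul z (-1 : ℂ) hpos hw
    rw [Odd.neg_pow hodd, one_pow] at this
    calc ∏ ζ ∈ Polynomial.nthRootsFinset n (1 : ℂ), (z + ζ)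
        = ∏ ζ ∈ Polynomial.nthRootsFinset n (1 : ℂ), (z - ζ * (-1)) := by
          refine Finset.prod_congr rfl fun ζ _ => by ring
      _ = z ^ n - -1 := this.symm
      _ = z ^ n + 1 := by ring
  have hdne : (1 : ℂ) + z ^ n ≠ 0 := hden ▸ Finset.prod_ne_zero_iff.mpr hfac
  have hone : ∏ ζ ∈ Polynomial.nthRootsFinset n (1 : ℂ), ((z + ζ) / (1 + z * ζ)) = 1 := by
    rw [Finset.prod_div_distrib, hnum, hden, add_comm (z ^ n) 1]
    exact div_self hdne
  -- the period lemma in terms of the product over `range n`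
  have key : ∀ m : ℕ,
      ∏ j ∈ Finset.range n,
          ((z + w ^ (2 * l * ((2 * ((((m + j : ℕ)) : ℤ) + 1) - 1) * k + b))) /
            (1 + z * w ^ (2 * l * ((2 * ((((m + j : ℕ)) : ℤ) + 1) - 1) * k + b)))) = 1 := by
    intro m
    have hre : ∀ j : ℕ,
        2 * l * ((2 * ((((m + j : ℕ)) : ℤ) + 1) - 1) * k + b)
          = 4 * l * k * (j : ℤ) + (4 * l * k * (m : ℤ) + 2 * l * (k + b)) := by
      intro j; push_cast; ring
    calc ∏ j ∈ Finset.range n,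
          ((z + w ^ (2 * l * ((2 * ((((m + j : ℕ)) : ℤ) + 1) - 1) * k + b))) /
            (1 + z * w ^ (2 * l * ((2 * ((((m + j : ℕ)) : ℤ) + 1) - 1) * k + b))))
        = ∏ j ∈ Finset.range n,
            ((z + w ^ (4 * l * k * (j : ℤ) + (4 * l * k * (m : ℤ) + 2 * l * (k + b)))) /
              (1 + z * w ^ (4 * l * k * (j : ℤ) + (4 * l * k * (m : ℤ) + 2 * l * (k + b))))) := by
          refine Finset.prod_congr rfl fun j _ => by rw [hre j]
      _ = ∏ ζ ∈ Polynomial.nthRootsFinset n (1 : ℂ), ((z + ζ) / (1 + z * ζ)) := hper _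
      _ = 1 := hone
  -- main induction
  have main : ∀ a : ℕ,
      ∏ j ∈ Finset.range a,
          ((z + w ^ (2 * l * ((2 * ((j : ℤ) + 1) - 1) * k + b))) /
            (1 + z * w ^ (2 * l * ((2 * ((j : ℤ) + 1) - 1) * k + b))))
        = ∏ j ∈ Finset.range (a % n),
            ((z + w ^ (2 * l * ((2 * ((j : ℤ) + 1) - 1) * k + b))) /
              (1 + z * w ^ (2 * l * ((2 * ((j : ℤ) + 1) - 1) * k + b)))) := by
    intro a
    induction a using Nat.strong_induction_on with
    | _ a ih =>
      by_cases h : a < n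
      · rw [Nat.mod_eq_of_lt h]
      · push_neg at h
        obtain ⟨m, rfl⟩ : ∃ m : ℕ, a = m + n := ⟨a - n, by omega⟩
        rw [Finset.prod_range_add, key m, mul_one, ih m (by omega), Nat.add_mod_right]
  exact main a
end

section
/- Let n ≥ 3 be odd, w a primitive n-th root of unity, and define L(z) ∈ End(ℂ² ⊗ ℂⁿ) by L(z) = Σ_{i=0}^{n-1} [ (w^{2i} e_{1,2} + w^{-2i} e_{2,1}) ⊗ e_{i,i} + z (e_{1,1} ⊗ e_{i-1,i} + e_{2,2} ⊗ e_{i+1,i}) ], where indices of the n×n elementary matrices are taken modulo n. Then with r(z) the zero-field six-vertex R-matrix (entries w²z^{-1}-w^{-2}z on corners, z^{-1}-z on middle diagonal, w²-w^{-2} anti-diagonal middle), the intertwining relation r_{12}(x y^{-1}) L_{13}(x) L_{23}(y) = L_{23}(y) L_{13}(x) r_{12}(x y^{-1}) holds for all nonzero x, y ∈ ℂ. -/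
set_option linter.unusedSectionVars false
set_option linter.unusedVariables false
set_option maxHeartbeats 1000000

open Matrix Kronecker Finset

noncomputable def E2 (i j : Fin 2) : Matrix (Fin 2) (Fin 2) ℂ :=
  Matrix.single i j 1

/-- elementary n×n matrix with indices mod n. -/
noncomputable def EM (n : ℕ) [NeZero n] (i j : ZMod n) : Matrix (ZMod n) (ZMod n) ℂ :=
  Matrix.single i j 1

def act12 {α β γ : Type*} [DecidableEq γ]
    (R : Matrix (α × β) (α × β) ℂ) : Matrix (α × β × γ) (α × β × γ) ℂ :=
  Matrix.of fun i j => R (i.1, i.2.1) (j.1, j.2.1) * (if i.2.2 = j.2.2 then 1 else 0)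

def act13 {α β γ : Type*} [DecidableEq β]
    (R : Matrix (α × γ) (α × γ) ℂ) : Matrix (α × β × γ) (α × β × γ) ℂ :=
  Matrix.of fun i j => R (i.1, i.2.2) (j.1, j.2.2) * (if i.2.1 = j.2.1 then 1 else 0)

def act23 {α β γ : Type*} [DecidableEq α]
    (R : Matrix (β × γ) (β × γ) ℂ) : Matrix (α × β × γ) (α × β × γ) ℂ :=
  Matrix.of fun i j => R (i.2.1, i.2.2) (j.2.1, j.2.2) * (if i.1 = j.1 then 1 else 0)

/-- zero-field six-vertex R-matrix. -/
noncomputable def sixv (w z : ℂ) : Matrix (Fin 2 × Fin 2) (Fin 2 × Fin 2) ℂ :=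
  (w ^ (2 : ℤ) * z⁻¹ - w ^ (-2 : ℤ) * z) • (E2 0 0 ⊗ₖ E2 0 0 + E2 1 1 ⊗ₖ E2 1 1)
    + (z⁻¹ - z) • (E2 0 0 ⊗ₖ E2 1 1 + E2 1 1 ⊗ₖ E2 0 0)
    + (w ^ (2 : ℤ) - w ^ (-2 : ℤ)) • (E2 0 1 ⊗ₖ E2 1 0 + E2 1 0 ⊗ₖ E2 0 1)

/-- the L-operator
`L(z) = Σ_i (w^{2i}e_{1,2} + w^{-2i}e_{2,1})⊗e_{i,i} + z(e_{1,1}⊗e_{i-1,i} + e_{2,2}⊗e_{i+1,i})`. -/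
noncomputable def Lop (n : ℕ) [NeZero n] (w z : ℂ) :
    Matrix (Fin 2 × ZMod n) (Fin 2 × ZMod n) ℂ :=
  ∑ i : ZMod n,
    (w ^ ((2 * (i.val : ℤ))) • (E2 0 1 ⊗ₖ EM n i i)
      + w ^ ((-2 * (i.val : ℤ))) • (E2 1 0 ⊗ₖ EM n i i)
      + z • (E2 0 0 ⊗ₖ EM n (i - 1) i)
      + z • (E2 1 1 ⊗ₖ EM n (i + 1) i))

lemma E2_mul (a b c d : Fin 2) : E2 a b * E2 c d = if b = c then E2 a d else 0 := by
  unfold E2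
  split
  · subst ‹b = c›; simp
  · simp [Matrix.single_mul_single_of_ne, ‹b ≠ c›]

lemma EM_mul (n : ℕ) [NeZero n] (i j k l : ZMod n) :
    EM n i j * EM n k l = if j = k then EM n i l else 0 := by
  unfold EM
  split
  · subst ‹j = k›; simp
  · simp [Matrix.single_mul_single_of_ne, ‹j ≠ k›]

lemma sum_EM_diag_one (n : ℕ) [NeZero n] : ∑ i : ZMod n, EM n i i = 1 := by
  ext a b
  simp [EM, Matrix.sum_apply, Matrix.single, Matrix.one_apply, ite_and]

lemma Dmul (n : ℕ) [NeZero n] (c d : ZMod n → ℂ) (σ τ : ZMod n → ZMod n) :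
    (∑ i : ZMod n, c i • EM n (σ i) i) * (∑ i : ZMod n, d i • EM n (τ i) i)
      = ∑ i : ZMod n, (c (τ i) * d i) • EM n (σ (τ i)) i := by
  rw [Finset.sum_mul_sum]
  rw [Finset.sum_comm]
  refine Finset.sum_congr rfl fun i _ => ?_
  have : ∀ j : ZMod n, (c j • EM n (σ j) j) * (d i • EM n (τ i) i)
      = if j = τ i then (c j * d i) • EM n (σ j) i else 0 := by
    intro j
    rw [smul_mul_smul_comm, EM_mul]
    split <;> simp [*]
  simp only [this]
  rw [Finset.sum_ite_eq' Finset.univ (τ i) (fun j => (c j * d i) • EM n (σ j) i)]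
  simp

noncomputable def Sm (n : ℕ) [NeZero n] (w : ℂ) : Matrix (ZMod n) (ZMod n) ℂ :=
  ∑ i : ZMod n, w ^ (2 * (i.val : ℤ)) • EM n i i

noncomputable def Sm' (n : ℕ) [NeZero n] (w : ℂ) : Matrix (ZMod n) (ZMod n) ℂ :=
  ∑ i : ZMod n, w ^ (-2 * (i.val : ℤ)) • EM n i i

noncomputable def Tmm (n : ℕ) [NeZero n] : Matrix (ZMod n) (ZMod n) ℂ :=
  ∑ i : ZMod n, EM n (i - 1) i

noncomputable def Tpp (n : ℕ) [NeZero n] : Matrix (ZMod n) (ZMod n) ℂ :=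
  ∑ i : ZMod n, EM n (i + 1) i

lemma Tmm_eq (n : ℕ) [NeZero n] : Tmm n = ∑ i : ZMod n, (1 : ℂ) • EM n (i - 1) i := by
  simp [Tmm]

lemma Tpp_eq (n : ℕ) [NeZero n] : Tpp n = ∑ i : ZMod n, (1 : ℂ) • EM n (i + 1) i := by
  simp [Tpp]

section rels
variable (n : ℕ) [NeZero n] (w : ℂ)

lemma wpow_congr (hw0 : w ≠ 0) (hw1 : w ^ (n : ℤ) = 1) (a b : ℤ)
    (h : ((a : ZMod n)) = ((b : ZMod n))) : w ^ a = w ^ b := by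
  have hd : (n : ℤ) ∣ b - a := by
    rw [← ZMod.intCast_zmod_eq_zero_iff_dvd]
    push_cast
    rw [h]; ring
  obtain ⟨k, hk⟩ := hd
  have hb : b = a + n * k := by linarith
  subst hb
  rw [zpow_add₀ hw0, _root_.zpow_mul, hw1, _root_.one_zpow, mul_one]

lemma relSS' (hw0 : w ≠ 0) (hw1 : w ^ (n : ℤ) = 1) : Sm n w * Sm' n w = 1 := by
  rw [Sm, Sm', Dmul n _ _ (fun i => i) (fun i => i)]
  rw [← sum_EM_diag_one n]
  refine Finset.sum_congr rfl fun i _ => ?_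
  rw [← zpow_add₀ hw0]
  norm_num

lemma relS'S (hw0 : w ≠ 0) (hw1 : w ^ (n : ℤ) = 1) : Sm' n w * Sm n w = 1 := by
  rw [Sm, Sm', Dmul n _ _ (fun i => i) (fun i => i)]
  rw [← sum_EM_diag_one n]
  refine Finset.sum_congr rfl fun i _ => ?_
  rw [← zpow_add₀ hw0]
  norm_num

lemma relTmTp : Tmm n * Tpp n = 1 := by
  rw [Tmm_eq, Tpp_eq, Dmul n _ _ (fun i => i - 1) (fun i => i + 1)]
  rw [← sum_EM_diag_one n]
  refine Finset.sum_congr rfl fun i _ => ?_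
  norm_num

lemma relTpTm : Tpp n * Tmm n = 1 := by
  rw [Tmm_eq, Tpp_eq, Dmul n _ _ (fun i => i + 1) (fun i => i - 1)]
  rw [← sum_EM_diag_one n]
  refine Finset.sum_congr rfl fun i _ => ?_
  norm_num

lemma relTmS (hw0 : w ≠ 0) (hw1 : w ^ (n : ℤ) = 1) :
    Tmm n * Sm n w = w ^ (2:ℤ) • (Sm n w * Tmm n) := by
  rw [Tmm_eq, Sm, Dmul n _ _ (fun i => i - 1) (fun i => i),
    Dmul n _ _ (fun i => i) (fun i => i - 1), Finset.smul_sum]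
  refine Finset.sum_congr rfl fun i _ => ?_
  rw [smul_smul]
  congr 1
  rw [one_mul, mul_one, ← zpow_add₀ hw0]
  refine wpow_congr n w hw0 hw1 _ _ ?_
  push_cast [ZMod.natCast_val, ZMod.cast_id]
  ring

lemma relTpS (hw0 : w ≠ 0) (hw1 : w ^ (n : ℤ) = 1) :
    Tpp n * Sm n w = w ^ (-2:ℤ) • (Sm n w * Tpp n) := by
  rw [Tpp_eq, Sm, Dmul n _ _ (fun i => i + 1) (fun i => i),
    Dmul n _ _ (fun i => i) (fun i => i + 1), Finset.smul_sum]
  refine Finset.sum_congr rfl fun i _ => ?_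
  rw [smul_smul]
  congr 1
  rw [one_mul, mul_one, ← zpow_add₀ hw0]
  refine wpow_congr n w hw0 hw1 _ _ ?_
  push_cast [ZMod.natCast_val, ZMod.cast_id]
  ring

lemma relTmS' (hw0 : w ≠ 0) (hw1 : w ^ (n : ℤ) = 1) :
    Tmm n * Sm' n w = w ^ (-2:ℤ) • (Sm' n w * Tmm n) := by
  rw [Tmm_eq, Sm', Dmul n _ _ (fun i => i - 1) (fun i => i),
    Dmul n _ _ (fun i => i) (fun i => i - 1), Finset.smul_sum]
  refine Finset.sum_congr rfl fun i _ => ?_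
  rw [smul_smul]
  congr 1
  rw [one_mul, mul_one, ← zpow_add₀ hw0]
  refine wpow_congr n w hw0 hw1 _ _ ?_
  push_cast [ZMod.natCast_val, ZMod.cast_id]
  ring

lemma relTpS' (hw0 : w ≠ 0) (hw1 : w ^ (n : ℤ) = 1) :
    Tpp n * Sm' n w = w ^ (2:ℤ) • (Sm' n w * Tpp n) := by
  rw [Tpp_eq, Sm', Dmul n _ _ (fun i => i + 1) (fun i => i),
    Dmul n _ _ (fun i => i) (fun i => i + 1), Finset.smul_sum]
  refine Finset.sum_congr rfl fun i _ => ?_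
  rw [smul_smul]
  congr 1
  rw [one_mul, mul_one, ← zpow_add₀ hw0]
  refine wpow_congr n w hw0 hw1 _ _ ?_
  push_cast [ZMod.natCast_val, ZMod.cast_id]
  ring

end rels

def kron3 {α β γ : Type*} (P : Matrix α α ℂ) (Q : Matrix β β ℂ) (M : Matrix γ γ ℂ) :
    Matrix (α × β × γ) (α × β × γ) ℂ :=
  Matrix.of fun i j => P i.1 j.1 * Q i.2.1 j.2.1 * M i.2.2 j.2.2

section kron3
variable {α β γ : Type*} [Fintype α] [Fintype β] [Fintype γ]
  [DecidableEq α] [DecidableEq β] [DecidableEq γ]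

lemma kron3_mul (P P' : Matrix α α ℂ) (Q Q' : Matrix β β ℂ) (M M' : Matrix γ γ ℂ) :
    kron3 P Q M * kron3 P' Q' M' = kron3 (P * P') (Q * Q') (M * M') := by
  ext i j
  simp only [kron3, Matrix.mul_apply, Matrix.of_apply]
  rw [Finset.sum_mul_sum, Finset.sum_mul, Fintype.sum_prod_type]
  refine Finset.sum_congr rfl fun a _ => ?_
  rw [Finset.sum_mul_sum, Fintype.sum_prod_type]
  refine Finset.sum_congr rfl fun b _ => Finset.sum_congr rfl fun c _ => by ring

lemma act12_kron (P : Matrix α α ℂ) (Q : Matrix β β ℂ) :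
    (act12 (P ⊗ₖ Q) : Matrix (α × β × γ) (α × β × γ) ℂ) = kron3 P Q 1 := by
  ext i j
  simp [act12, kron3, Matrix.one_apply]

lemma act13_kron (P : Matrix α α ℂ) (M : Matrix γ γ ℂ) :
    (act13 (P ⊗ₖ M) : Matrix (α × β × γ) (α × β × γ) ℂ) = kron3 P 1 M := by
  ext i j
  simp [act13, kron3, Matrix.one_apply]

lemma act23_kron (Q : Matrix β β ℂ) (M : Matrix γ γ ℂ) :
    (act23 (Q ⊗ₖ M) : Matrix (α × β × γ) (α × β × γ) ℂ) = kron3 1 Q M := by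
  ext i j
  simp [act23, kron3, Matrix.one_apply]

lemma act12_add (A B : Matrix (α × β) (α × β) ℂ) :
    (act12 (A + B) : Matrix (α × β × γ) (α × β × γ) ℂ) = act12 A + act12 B := by
  ext i j; simp only [act12, Matrix.of_apply, Matrix.add_apply, mul_ite, mul_one, mul_zero]; split <;> simp

lemma act13_add (A B : Matrix (α × γ) (α × γ) ℂ) :
    (act13 (A + B) : Matrix (α × β × γ) (α × β × γ) ℂ) = act13 A + act13 B := by
  ext i j; simp only [act13, Matrix.of_apply, Matrix.add_apply, mul_ite, mul_one, mul_zero]; split <;> simp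

lemma act23_add (A B : Matrix (β × γ) (β × γ) ℂ) :
    (act23 (A + B) : Matrix (α × β × γ) (α × β × γ) ℂ) = act23 A + act23 B := by
  ext i j; simp only [act23, Matrix.of_apply, Matrix.add_apply, mul_ite, mul_one, mul_zero]; split <;> simp

lemma act12_smul (c : ℂ) (A : Matrix (α × β) (α × β) ℂ) :
    (act12 (c • A) : Matrix (α × β × γ) (α × β × γ) ℂ) = c • act12 A := by
  ext i j; simp [act12, mul_assoc]

lemma act13_smul (c : ℂ) (A : Matrix (α × γ) (α × γ) ℂ) :
    (act13 (c • A) : Matrix (α × β × γ) (α × β × γ) ℂ) = c • act13 A := by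
  ext i j; simp [act13, mul_assoc]

lemma act23_smul (c : ℂ) (A : Matrix (β × γ) (β × γ) ℂ) :
    (act23 (c • A) : Matrix (α × β × γ) (α × β × γ) ℂ) = c • act23 A := by
  ext i j; simp [act23, mul_assoc]

lemma kron3_zero₁ (Q : Matrix β β ℂ) (M : Matrix γ γ ℂ) : kron3 (0 : Matrix α α ℂ) Q M = 0 := by
  ext i j; simp [kron3]

lemma kron3_zero₂ (P : Matrix α α ℂ) (M : Matrix γ γ ℂ) : kron3 P (0 : Matrix β β ℂ) M = 0 := by
  ext i j; simp [kron3]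

lemma kron3_zero₃ (P : Matrix α α ℂ) (Q : Matrix β β ℂ) : kron3 P Q (0 : Matrix γ γ ℂ) = 0 := by
  ext i j; simp [kron3]

lemma kron3_smul₃ (c : ℂ) (P : Matrix α α ℂ) (Q : Matrix β β ℂ) (M : Matrix γ γ ℂ) :
    kron3 P Q (c • M) = c • kron3 P Q M := by
  ext i j; simp [kron3]; ring

end kron3

lemma kron_sum_smul (n : ℕ) [NeZero n] (c : ZMod n → ℂ) (P : Matrix (Fin 2) (Fin 2) ℂ)
    (σ : ZMod n → ZMod n) :
    ∑ i : ZMod n, c i • (P ⊗ₖ EM n (σ i) i) = P ⊗ₖ ∑ i : ZMod n, c i • EM n (σ i) i := by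
  ext a b
  simp [Matrix.sum_apply, Finset.mul_sum, Matrix.kroneckerMap_apply]
  refine Finset.sum_congr rfl fun i _ => by ring

lemma Lop_eq (n : ℕ) [NeZero n] (w z : ℂ) :
    Lop n w z = E2 0 1 ⊗ₖ Sm n w + E2 1 0 ⊗ₖ Sm' n w
      + z • (E2 0 0 ⊗ₖ Tmm n) + z • (E2 1 1 ⊗ₖ Tpp n) := by
  rw [Lop]
  simp only [Finset.sum_add_distrib]
  rw [kron_sum_smul, kron_sum_smul, kron_sum_smul, kron_sum_smul]
  rw [← Sm, ← Sm']
  rw [Tmm, Tpp, ← Finset.smul_sum, ← Finset.smul_sum, kronecker_smul, kronecker_smul]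

/-- the intertwining relation
`r₁₂(xy⁻¹) L₁₃(x) L₂₃(y) = L₂₃(y) L₁₃(x) r₁₂(xy⁻¹)`. -/
theorem stmt2 (n : ℕ) [NeZero n] (hn : 3 ≤ n) (hodd : Odd n)
    (w : ℂ) (hw : IsPrimitiveRoot w n) (x y : ℂ) (hx : x ≠ 0) (hy : y ≠ 0) :
    act12 (sixv w (x * y⁻¹)) * act13 (Lop n w x) * act23 (Lop n w y)
      = act23 (Lop n w y) * act13 (Lop n w x) * act12 (sixv w (x * y⁻¹)) := by
  have hw0 : w ≠ 0 := hw.ne_zero (NeZero.ne n)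
  have hw1 : w ^ (n : ℤ) = 1 := by rw [zpow_natCast, hw.pow_eq_one]
  have h2 : w ^ (2:ℤ) ≠ 0 := zpow_ne_zero _ hw0
  rw [Lop_eq, Lop_eq, sixv]
  simp only [act12_add, act12_smul, act13_add, act13_smul, act23_add, act23_smul,
    act12_kron, act13_kron, act23_kron]
  simp only [mul_add, add_mul, smul_mul_assoc, mul_smul_comm, kron3_mul, E2_mul,
    one_mul, mul_one, zero_mul, mul_zero, kron3_zero₁, kron3_zero₂, kron3_zero₃,
    smul_zero, add_zero, zero_add, smul_smul, Fin.isValue, one_ne_zero, zero_ne_one,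
    reduceIte, if_true, if_false]
  simp only [relTmS n w hw0 hw1, relTpS n w hw0 hw1, relTmS' n w hw0 hw1,
    relTpS' n w hw0 hw1, relSS' n w hw0 hw1, relS'S n w hw0 hw1, relTmTp n,
    relTpTm n, kron3_smul₃, smul_smul]
  simp only [_root_.zpow_neg]
  match_scalars <;> field_simp <;> ring
end

section
/- Let n be odd and w a primitive n-th root of unity. For α = (a,b) with 0 ≤ a ≤ (n-1)/2 (and appropriate range of b), define p^α = (c^α/n) Σ_{i,j=0}^{n-1} [ w^{2bj} e_{i+a+j,i+a} ⊗ e_{i+j,i} + w^{-2bj} e_{i-a+j,i-a} ⊗ e_{i+j,i} ], where c^α = 1/2 if α = (0,0) and c^α = 1 otherwise. Then each p^α is idempotent: (p^α)² = p^α. -/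
open Matrix Kronecker Finset

/-- normalisation constant: `1/2` for `α=(0,0)`, else `1`. -/
noncomputable def ccoef (a b : ℕ) : ℂ := if a = 0 ∧ b = 0 then 1 / 2 else 1

/-- the projection operator
`p^{(a,b)} = (c/n) Σ_{i,j} [w^{2bj} e_{i+a+j,i+a}⊗e_{i+j,i} + w^{-2bj} e_{i-a+j,i-a}⊗e_{i+j,i}]`. -/
noncomputable def proj (n : ℕ) [NeZero n] (w : ℂ) (a b : ℕ) :
    Matrix (ZMod n × ZMod n) (ZMod n × ZMod n) ℂ :=
  (ccoef a b / (n : ℂ)) • ∑ i : ZMod n, ∑ j : ZMod n,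
    (w ^ ((2 * (b : ℤ) * (j.val : ℤ))) • (EM n (i + (a : ZMod n) + j) (i + (a : ZMod n)) ⊗ₖ EM n (i + j) i)
      + w ^ ((-(2 * (b : ℤ) * (j.val : ℤ)))) • (EM n (i - (a : ZMod n) + j) (i - (a : ZMod n)) ⊗ₖ EM n (i + j) i))

section
variable {n : ℕ} [NeZero n] {w : ℂ}

lemma wpow_congr_s3 (hw : IsPrimitiveRoot w n) {m m' : ℤ}
    (h : ((m : ZMod n)) = ((m' : ZMod n))) : w ^ m = w ^ m' := by
  have hw0 : w ≠ 0 := hw.ne_zero (NeZero.ne n)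
  have hdvd : (n : ℤ) ∣ (m - m') := by
    rwa [← ZMod.intCast_zmod_eq_zero_iff_dvd, Int.cast_sub, sub_eq_zero]
  have h1 : w ^ (m - m') = 1 := (hw.zpow_eq_one_iff_dvd _).2 hdvd
  have : w ^ m = w ^ m' * w ^ (m - m') := by
    rw [← zpow_add₀ hw0]; ring_nf
  rw [this, h1, mul_one]

lemma sum_zmod_val (f : ℕ → ℂ) : ∑ t : ZMod n, f t.val = ∑ k ∈ Finset.range n, f k :=
  Finset.sum_nbij' (fun t => t.val) (fun k => (k : ZMod n))
    (fun t _ => Finset.mem_range.2 (ZMod.val_lt t)) (fun k _ => Finset.mem_univ _)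
    (fun t _ => ZMod.natCast_rightInverse t)
    (fun k hk => ZMod.val_cast_of_lt (Finset.mem_range.1 hk)) (fun t _ => rfl)

/-- geometric-type sum vanishes when `n ∤ m`. -/
lemma sum_wpow_zero (hw : IsPrimitiveRoot w n) {m : ℤ} (hm : ¬ (n : ℤ) ∣ m) :
    ∑ v : ZMod n, w ^ (m * (v.val : ℤ)) = 0 := by
  have hterm : ∀ v : ZMod n, w ^ (m * (v.val : ℤ)) = (w ^ m) ^ (v.val) := by
    intro v
    rw [← zpow_natCast (w ^ m) v.val, ← _root_.zpow_mul]
  simp only [hterm]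
  rw [sum_zmod_val (fun k => (w ^ m) ^ k)]
  rw [geom_sum_eq, ← zpow_natCast (w^m) n, ← _root_.zpow_mul, mul_comm,
    (hw.zpow_eq_one_iff_dvd _).2 ⟨m, rfl⟩, sub_self, zero_div]
  intro h
  exact hm ((hw.zpow_eq_one_iff_dvd m).1 h)

lemma proj_apply (w : ℂ) (a b : ℕ) (x u y v : ZMod n) :
    proj n w a b (x, u) (y, v) = (ccoef a b / (n : ℂ)) *
      ((if u + (a : ZMod n) = x ∧ v + (a : ZMod n) = y then w ^ (2 * (b:ℤ) * (((u - v).val : ℤ))) else 0)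
       + (if u - (a : ZMod n) = x ∧ v - (a : ZMod n) = y then w ^ (-(2 * (b:ℤ) * (((u - v).val : ℤ)))) else 0)) := by
  rw [proj, Matrix.smul_apply, smul_eq_mul]
  congr 1
  rw [Matrix.sum_apply]
  rw [Finset.sum_eq_single v]
  · rw [Matrix.sum_apply, Finset.sum_eq_single (u - v)]
    · have e1 : v + (a : ZMod n) + (u - v) = u + a := by ring
      have e2 : v - (a : ZMod n) + (u - v) = u - a := by ring
      have e3 : v + (u - v) = u := by ring
      simp only [Matrix.add_apply, Matrix.smul_apply, kroneckerMap_apply, EM,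
        Matrix.single, Matrix.of_apply, smul_eq_mul, e1, e2, e3, and_self, if_true,
        mul_one, mul_ite, mul_zero, add_sub_cancel]
    · intro j _ hj
      have hj' : ¬ (v + j = u) := fun h => hj (by rw [← h]; ring)
      simp [EM, Matrix.single, Matrix.of_apply, hj']
    · intro h; exact absurd (Finset.mem_univ _) h
  · intro i _ hi
    rw [Matrix.sum_apply]
    apply Finset.sum_eq_zero
    intro j _
    simp [EM, Matrix.single, Matrix.of_apply, hi]
  · intro h; exact absurd (Finset.mem_univ _) h
end

/-- the four rank-one factor vectors -/
noncomputable def fP (n : ℕ) [NeZero n] (w : ℂ) (a b : ℕ) : ZMod n × ZMod n → ℂ :=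
  fun p => if p.1 = p.2 + (a : ZMod n) then w ^ (2 * (b:ℤ) * (p.2.val : ℤ)) else 0
noncomputable def gP (n : ℕ) [NeZero n] (w : ℂ) (a b : ℕ) : ZMod n × ZMod n → ℂ :=
  fun p => if p.1 = p.2 + (a : ZMod n) then w ^ (-(2 * (b:ℤ) * (p.2.val : ℤ))) else 0
noncomputable def fM (n : ℕ) [NeZero n] (w : ℂ) (a b : ℕ) : ZMod n × ZMod n → ℂ :=
  fun p => if p.1 = p.2 - (a : ZMod n) then w ^ (-(2 * (b:ℤ) * (p.2.val : ℤ))) else 0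
noncomputable def gM (n : ℕ) [NeZero n] (w : ℂ) (a b : ℕ) : ZMod n × ZMod n → ℂ :=
  fun p => if p.1 = p.2 - (a : ZMod n) then w ^ (2 * (b:ℤ) * (p.2.val : ℤ)) else 0

section
variable {n : ℕ} [NeZero n] {w : ℂ}

lemma vmv_mul (f g f' g' : ZMod n × ZMod n → ℂ) :
    vecMulVec f g * vecMulVec f' g' = (g ⬝ᵥ f') • vecMulVec f g' := by
  ext i j
  simp only [Matrix.mul_apply, vecMulVec_apply, Matrix.smul_apply, smul_eq_mul,
    dotProduct, Finset.sum_mul]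
  exact Finset.sum_congr rfl fun k _ => by ring

lemma proj_eq (hw : IsPrimitiveRoot w n) (a b : ℕ) :
    proj n w a b = (ccoef a b / (n : ℂ)) •
      (vecMulVec (fP n w a b) (gP n w a b) + vecMulVec (fM n w a b) (gM n w a b)) := by
  have hw0 : w ≠ 0 := hw.ne_zero (NeZero.ne n)
  ext ⟨x, u⟩ ⟨y, v⟩
  rw [proj_apply]
  have key1 : w ^ (2*(b:ℤ)*(((u-v).val:ℤ))) =
      w ^ (2*(b:ℤ)*((u.val:ℤ))) * w ^ (-(2*(b:ℤ)*((v.val:ℤ)))) := by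
    rw [← zpow_add₀ hw0]
    apply wpow_congr_s3 hw
    push_cast [ZMod.natCast_val, ZMod.cast_id]
    ring
  have key2 : w ^ (-(2*(b:ℤ)*(((u-v).val:ℤ)))) =
      w ^ (-(2*(b:ℤ)*((u.val:ℤ)))) * w ^ ((2*(b:ℤ)*((v.val:ℤ)))) := by
    rw [← zpow_add₀ hw0]
    apply wpow_congr_s3 hw
    push_cast [ZMod.natCast_val, ZMod.cast_id]
    ring
  simp only [Matrix.smul_apply, Matrix.add_apply, vecMulVec_apply, smul_eq_mul,
    fP, gP, fM, gM, ite_mul, mul_ite, zero_mul, mul_zero]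
  congr 1
  congr 1
  · rw [← ite_and]
    exact if_congr (by constructor <;> (rintro ⟨r, s⟩; exact ⟨s.symm, r.symm⟩)) key1 rfl
  · rw [← ite_and]
    exact if_congr (by constructor <;> (rintro ⟨r, s⟩; exact ⟨s.symm, r.symm⟩)) key2 rfl

lemma dot_gP_fP (hw : IsPrimitiveRoot w n) (a b : ℕ) :
    gP n w a b ⬝ᵥ fP n w a b = (n : ℂ) := by
  have hw0 : w ≠ 0 := hw.ne_zero (NeZero.ne n)
  simp only [dotProduct, gP, fP]
  rw [Fintype.sum_prod_type]
  have : ∀ y : ZMod n, ∑ v : ZMod n,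
      (if y = v + (a:ZMod n) then w ^ (-(2*(b:ℤ)*(v.val:ℤ))) else 0) *
      (if y = v + (a:ZMod n) then w ^ (2*(b:ℤ)*(v.val:ℤ)) else 0) = 1 := by
    intro y
    rw [Finset.sum_eq_single (y - (a : ZMod n))]
    · have e : y - (a : ZMod n) + (a : ZMod n) = y := by ring
      rw [e, if_pos rfl, if_pos rfl, ← zpow_add₀ hw0, neg_add_cancel, zpow_zero]
    · intro v _ hv
      have : ¬ (y = v + (a : ZMod n)) := fun h => hv (by rw [h]; ring)
      simp [this]
    · intro h; exact absurd (Finset.mem_univ _) h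
  rw [Finset.sum_congr rfl (fun y _ => this y), Finset.sum_const, Finset.card_univ]
  simp [ZMod.card]

lemma dot_gM_fM (hw : IsPrimitiveRoot w n) (a b : ℕ) :
    gM n w a b ⬝ᵥ fM n w a b = (n : ℂ) := by
  have hw0 : w ≠ 0 := hw.ne_zero (NeZero.ne n)
  simp only [dotProduct, gM, fM]
  rw [Fintype.sum_prod_type]
  have : ∀ y : ZMod n, ∑ v : ZMod n,
      (if y = v - (a:ZMod n) then w ^ (2*(b:ℤ)*(v.val:ℤ)) else 0) *
      (if y = v - (a:ZMod n) then w ^ (-(2*(b:ℤ)*(v.val:ℤ))) else 0) = 1 := by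
    intro y
    rw [Finset.sum_eq_single (y + (a : ZMod n))]
    · have e : y + (a : ZMod n) - (a : ZMod n) = y := by ring
      rw [e, if_pos rfl, if_pos rfl, ← zpow_add₀ hw0, add_neg_cancel, zpow_zero]
    · intro v _ hv
      have : ¬ (y = v - (a : ZMod n)) := fun h => hv (by rw [h]; ring)
      simp [this]
    · intro h; exact absurd (Finset.mem_univ _) h
  rw [Finset.sum_congr rfl (fun y _ => this y), Finset.sum_const, Finset.card_univ]
  simp [ZMod.card]

/-- cross dot products vanish when `2a ≢ 0 (mod n)` -/
lemma dot_gP_fM_of_ne (a b : ℕ) (ha : (a : ZMod n) + a ≠ 0) :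
    gP n w a b ⬝ᵥ fM n w a b = 0 := by
  simp only [dotProduct, gP, fM]
  apply Finset.sum_eq_zero
  rintro ⟨y, v⟩ _
  by_cases h1 : y = v + (a : ZMod n)
  · have h2 : ¬ (y = v - (a : ZMod n)) := by
      intro h2
      apply ha
      have := h1.symm.trans h2
      linear_combination this
    simp [h2]
  · simp [h1]

lemma dot_gM_fP_of_ne (a b : ℕ) (ha : (a : ZMod n) + a ≠ 0) :
    gM n w a b ⬝ᵥ fP n w a b = 0 := by
  simp only [dotProduct, gM, fP]
  apply Finset.sum_eq_zero
  rintro ⟨y, v⟩ _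
  by_cases h1 : y = v - (a : ZMod n)
  · have h2 : ¬ (y = v + (a : ZMod n)) := by
      intro h2
      apply ha
      have := h1.symm.trans h2
      linear_combination -this
    simp [h2]
  · simp [h1]

/-- cross dot products vanish when `a = 0` and `n ∤ 4b` -/
lemma dot_gP_fM_zero (hw : IsPrimitiveRoot w n) (b : ℕ) (hb : ¬ (n : ℤ) ∣ 4 * b) :
    gP n w 0 b ⬝ᵥ fM n w 0 b = 0 := by
  simp only [dotProduct, gP, fM, Nat.cast_zero, add_zero, sub_zero]
  rw [Fintype.sum_prod_type]
  have : ∀ y : ZMod n, ∑ v : ZMod n,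
      (if y = v then w ^ (-(2*(b:ℤ)*(v.val:ℤ))) else 0) *
      (if y = v then w ^ (-(2*(b:ℤ)*(v.val:ℤ))) else 0)
      = w ^ ((-(4 * (b:ℤ))) * (y.val : ℤ)) := by
    intro y
    rw [Finset.sum_eq_single y]
    · have hw0 : w ≠ 0 := hw.ne_zero (NeZero.ne n)
      rw [if_pos rfl, ← zpow_add₀ hw0]
      congr 1; ring
    · intro v _ hv; simp [Ne.symm hv]
    · intro h; exact absurd (Finset.mem_univ _) h
  rw [Finset.sum_congr rfl (fun y _ => this y)]
  apply sum_wpow_zero hw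
  rwa [Int.dvd_neg]

lemma dot_gM_fP_zero (hw : IsPrimitiveRoot w n) (b : ℕ) (hb : ¬ (n : ℤ) ∣ 4 * b) :
    gM n w 0 b ⬝ᵥ fP n w 0 b = 0 := by
  simp only [dotProduct, gM, fP, Nat.cast_zero, add_zero, sub_zero]
  rw [Fintype.sum_prod_type]
  have : ∀ y : ZMod n, ∑ v : ZMod n,
      (if y = v then w ^ ((2*(b:ℤ)*(v.val:ℤ))) else 0) *
      (if y = v then w ^ ((2*(b:ℤ)*(v.val:ℤ))) else 0)
      = w ^ ((4 * (b:ℤ)) * (y.val : ℤ)) := by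
    intro y
    rw [Finset.sum_eq_single y]
    · have hw0 : w ≠ 0 := hw.ne_zero (NeZero.ne n)
      rw [if_pos rfl, ← zpow_add₀ hw0]
      congr 1; ring
    · intro v _ hv; simp [Ne.symm hv]
    · intro h; exact absurd (Finset.mem_univ _) h
  rw [Finset.sum_congr rfl (fun y _ => this y)]
  exact sum_wpow_zero hw hb

end

/-- the index set `S`: `(0,0)`; `(0,b)` for `1 ≤ b ≤ (n-1)/2`; `(a,b)` for
`1 ≤ a ≤ (n-1)/2`, `0 ≤ b ≤ n-1`. -/
def idxS (n : ℕ) : Finset (ℕ × ℕ) :=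
  (Finset.range n ×ˢ Finset.range n).filter
    (fun p => (p.1 = 0 ∧ p.2 = 0) ∨ (p.1 = 0 ∧ 1 ≤ p.2 ∧ p.2 ≤ (n - 1) / 2)
      ∨ (1 ≤ p.1 ∧ p.1 ≤ (n - 1) / 2))

/-- each `p^α`, `α ∈ S`, is idempotent. -/
theorem stmt3 (n : ℕ) [NeZero n] (hodd : Odd n) (w : ℂ) (hw : IsPrimitiveRoot w n)
    (a b : ℕ) (hab : (a, b) ∈ idxS n) :
    proj n w a b * proj n w a b = proj n w a b := by
  have hn : (n : ℂ) ≠ 0 := Nat.cast_ne_zero.2 (NeZero.ne n)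
  have hn1 : 1 ≤ n := Nat.one_le_iff_ne_zero.2 (NeZero.ne n)
  simp only [idxS, Finset.mem_filter, Finset.mem_product, Finset.mem_range] at hab
  obtain ⟨⟨han, hbn⟩, hcase⟩ := hab
  rw [proj_eq hw]
  rw [smul_mul_assoc, mul_smul_comm, Matrix.add_mul, Matrix.mul_add, Matrix.mul_add,
    vmv_mul, vmv_mul, vmv_mul, vmv_mul, dot_gP_fP hw, dot_gM_fM hw]
  rcases hcase with ⟨ha0, hb0⟩ | ⟨ha0, hb1, hb2⟩ | ⟨ha1, ha2⟩
  · -- case (0,0)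
    subst ha0; subst hb0
    have hfg : fP n w 0 0 = fM n w 0 0 := by
      funext p; simp [fP, fM]
    have hgg : gP n w 0 0 = gM n w 0 0 := by
      funext p; simp [gP, gM]
    have hc : ccoef 0 0 = 1 / 2 := by simp [ccoef]
    rw [hc, ← hfg, ← hgg, dot_gP_fP hw]
    set V := vecMulVec (fP n w 0 0) (gP n w 0 0) with hV
    have hsum : (n:ℂ) • V + (n:ℂ) • V + ((n:ℂ) • V + (n:ℂ) • V) = ((4*(n:ℂ))) • V := by
      module
    rw [hsum, smul_smul, smul_smul, ← two_smul ℂ V, smul_smul]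
    congr 1
    field_simp
    ring
  · -- case (0,b), 1 ≤ b ≤ (n-1)/2
    subst ha0
    have hb4 : ¬ (n : ℤ) ∣ 4 * b := by
      intro hdvd
      have hd : n ∣ 4 * b := by exact_mod_cast hdvd
      have hcop : Nat.Coprime n 4 := by
        have h2 : Nat.Coprime n 2 := Nat.coprime_two_right.2 hodd
        have := h2.pow_right 2
        norm_num at this
        exact this
      have := Nat.le_of_dvd (by omega) (hcop.dvd_of_dvd_mul_left hd)
      omega
    rw [dot_gP_fM_zero hw b hb4, dot_gM_fP_zero hw b hb4]
    have hc : ccoef 0 b = 1 := by simp [ccoef]; omega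
    rw [hc]
    simp only [zero_smul, add_zero, zero_add]
    rw [smul_smul, smul_add, smul_add, smul_smul, smul_smul]
    congr 1 <;> · congr 1; field_simp
  · -- case a ≥ 1
    have ha : ((a : ZMod n) + a) ≠ 0 := by
      intro h
      have : ((2 * a : ℕ) : ZMod n) = 0 := by push_cast; linear_combination h
      rw [ZMod.natCast_eq_zero_iff] at this
      have h2a : 0 < 2 * a := by omega
      have := Nat.le_of_dvd h2a this
      omega
    rw [dot_gP_fM_of_ne a b ha, dot_gM_fP_of_ne a b ha]
    have hc : ccoef a b = 1 := by simp [ccoef]; omega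
    rw [hc]
    simp only [zero_smul, add_zero, zero_add]
    rw [smul_smul, smul_add, smul_add, smul_smul, smul_smul]
    congr 1 <;> · congr 1; field_simp
end

section
/- Let n be odd and w a primitive n-th root of unity. The projection operators p^α on ℂⁿ ⊗ ℂⁿ defined by p^{(a,b)} = (c^{(a,b)}/n) Σ_{i,j=0}^{n-1} [ w^{2bj} e_{i+a+j,i+a} ⊗ e_{i+j,i} + w^{-2bj} e_{i-a+j,i-a} ⊗ e_{i+j,i} ] are mutually orthogonal: p^α p^β = 0 for α ≠ β in the index set S. -/
open Matrix Kronecker Finset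

/-! ### Auxiliary machinery -/

/-- The basic building block `T_A^B = Σ_{i,j} w^{Bj} e_{i+A+j,i+A} ⊗ e_{i+j,i}`. -/
noncomputable def Tm (n : ℕ) [NeZero n] (w : ℂ) (A : ZMod n) (B : ℤ) :
    Matrix (ZMod n × ZMod n) (ZMod n × ZMod n) ℂ :=
  ∑ i : ZMod n, ∑ j : ZMod n,
    w ^ (B * (j.val : ℤ)) • (EM n (i + A + j) (i + A) ⊗ₖ EM n (i + j) i)

lemma zpow_congr_aux {n : ℕ} [NeZero n] {w : ℂ} (hwn : w ^ (n : ℕ) = 1) {x y : ℤ}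
    (h : (n : ℤ) ∣ x - y) : w ^ x = w ^ y := by
  have hw0 : w ≠ 0 := by
    intro h0
    rw [h0, zero_pow (NeZero.ne n)] at hwn
    exact one_ne_zero hwn.symm
  obtain ⟨t, ht⟩ := h
  have hx : x = y + (n : ℤ) * t := by linarith
  rw [hx, zpow_add₀ hw0, _root_.zpow_mul, zpow_natCast, hwn, _root_.one_zpow, mul_one]

lemma dvd_val_sub {n : ℕ} [NeZero n] (x y : ZMod n) :
    (n : ℤ) ∣ (((x - y).val : ℤ) - ((x.val : ℤ) - (y.val : ℤ))) := by
  rw [← ZMod.intCast_zmod_eq_zero_iff_dvd]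
  push_cast [ZMod.natCast_val, ZMod.cast_id]
  ring

lemma charSum {n : ℕ} [NeZero n] {w : ℂ} (hw : IsPrimitiveRoot w n) {C : ℤ}
    (hC : ¬ (n : ℤ) ∣ C) : ∑ v : ZMod n, w ^ (C * (v.val : ℤ)) = 0 := by
  have hz1 : w ^ C ≠ 1 := fun h1 => hC ((hw.zpow_eq_one_iff_dvd C).1 h1)
  have hzn : (w ^ C) ^ (n : ℕ) = 1 := by
    rw [← zpow_natCast (w ^ C) n, ← _root_.zpow_mul, mul_comm, _root_.zpow_mul, zpow_natCast,
      hw.pow_eq_one, _root_.one_zpow]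
  have hstep : ∀ v : ZMod n, w ^ (C * (v.val : ℤ)) = (w ^ C) ^ (v.val : ℕ) := by
    intro v
    rw [_root_.zpow_mul, zpow_natCast]
  rw [Finset.sum_congr rfl fun v _ => hstep v]
  have hre : ∑ v : ZMod n, (w ^ C) ^ (v.val : ℕ) = ∑ m ∈ Finset.range n, (w ^ C) ^ m := by
    apply Finset.sum_nbij' (fun v : ZMod n => v.val) (fun m : ℕ => (m : ZMod n))
    · intro a _; exact Finset.mem_range.2 (ZMod.val_lt a)
    · intro a _; exact Finset.mem_univ _
    · intro a _; exact ZMod.natCast_rightInverse a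
    · intro a ha; exact ZMod.val_cast_of_lt (Finset.mem_range.1 ha)
    · intro a _; rfl
  rw [hre, geom_sum_eq hz1, hzn, sub_self, zero_div]

lemma Tm_apply (n : ℕ) [NeZero n] (w : ℂ) (A : ZMod n) (B : ℤ) (p q u v : ZMod n) :
    Tm n w A B (p, q) (u, v) =
      if q + A = p ∧ v + A = u then w ^ (B * (((q - v).val : ℤ))) else 0 := by
  unfold Tm EM
  simp only [Matrix.sum_apply, Matrix.smul_apply, Matrix.kroneckerMap_apply,
    Matrix.single, Matrix.of_apply, smul_eq_mul]
  rw [Finset.sum_eq_single v]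
  · rw [Finset.sum_eq_single (q - v)]
    · have h1 : v + (q - v) = q := by ring
      have h2 : v + A + (q - v) = q + A := by ring
      rw [h1, h2]
      simp
    · intro j _ hj
      have hvj : v + j ≠ q := fun hh => hj (by rw [← hh]; ring)
      simp [hvj]
    · intro h; exact absurd (Finset.mem_univ _) h
  · intro i _ hi
    apply Finset.sum_eq_zero
    intro j _
    have : ¬ (i + j = q ∧ i = v) := fun hc => hi hc.2
    simp [this]
  · intro h; exact absurd (Finset.mem_univ _) h

lemma Tm_mul_ne (n : ℕ) [NeZero n] (w : ℂ) {A A' : ZMod n} (h : A ≠ A') (B B' : ℤ) :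
    Tm n w A B * Tm n w A' B' = 0 := by
  ext ⟨p, q⟩ ⟨r, s⟩
  rw [Matrix.mul_apply, Matrix.zero_apply, Fintype.sum_prod_type]
  apply Finset.sum_eq_zero; intro u _
  apply Finset.sum_eq_zero; intro v _
  rw [Tm_apply, Tm_apply]
  by_cases h1 : v + A = u
  · have h2 : ¬ (v + A' = u ∧ s + A' = r) :=
      fun hc => h (add_left_cancel (h1.trans hc.1.symm))
    simp [h2]
  · have h2 : ¬ (q + A = p ∧ v + A = u) := fun hc => h1 hc.2
    simp [h2]

lemma Tm_mul_same (n : ℕ) [NeZero n] {w : ℂ} (hw : IsPrimitiveRoot w n) (A : ZMod n)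
    {B B' : ℤ} (h : ¬ (n : ℤ) ∣ (B' - B)) : Tm n w A B * Tm n w A B' = 0 := by
  have hwn : w ^ (n : ℕ) = 1 := hw.pow_eq_one
  have hw0 : w ≠ 0 := by
    intro h0
    rw [h0, zero_pow (NeZero.ne n)] at hwn
    exact one_ne_zero hwn.symm
  ext ⟨p, q⟩ ⟨r, s⟩
  rw [Matrix.mul_apply, Matrix.zero_apply, Fintype.sum_prod_type]
  simp only [Tm_apply]
  by_cases hp : q + A = p
  · by_cases hr : s + A = r
    · calc
        ∑ u : ZMod n, ∑ v : ZMod n,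
            (if q + A = p ∧ v + A = u then w ^ (B * (((q - v).val : ℤ))) else 0) *
            (if v + A = u ∧ s + A = r then w ^ (B' * (((v - s).val : ℤ))) else 0)
            = ∑ v : ZMod n, w ^ (B * (((q - v).val : ℤ))) * w ^ (B' * (((v - s).val : ℤ))) := by
              rw [Finset.sum_comm]
              refine Finset.sum_congr rfl fun v _ => ?_
              rw [Finset.sum_eq_single (v + A)]
              · simp [hp, hr]
              · intro u _ hu
                have : ¬ (v + A = u) := fun hc => hu hc.symm
                simp [this]
              · intro h'; exact absurd (Finset.mem_univ _) h'
        _ = ∑ v : ZMod n,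
              w ^ (B * (q.val : ℤ) - B' * (s.val : ℤ)) * w ^ ((B' - B) * (v.val : ℤ)) := by
              refine Finset.sum_congr rfl fun v _ => ?_
              rw [← zpow_add₀ hw0, ← zpow_add₀ hw0]
              apply zpow_congr_aux hwn
              have h1 := dvd_val_sub q v
              have h2 := dvd_val_sub v s
              have hring : (B * (((q - v).val : ℤ)) + B' * (((v - s).val : ℤ))) -
                  (B * (q.val : ℤ) - B' * (s.val : ℤ) + (B' - B) * (v.val : ℤ)) =
                  B * ((((q - v).val : ℤ)) - ((q.val : ℤ) - (v.val : ℤ))) +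
                  B' * ((((v - s).val : ℤ)) - ((v.val : ℤ) - (s.val : ℤ))) := by ring
              rw [hring]
              exact dvd_add (Dvd.dvd.mul_left h1 B) (Dvd.dvd.mul_left h2 B')
        _ = 0 := by rw [← Finset.mul_sum, charSum hw h, mul_zero]
    · have h2 : ∀ v u : ZMod n, ¬ (v + A = u ∧ s + A = r) := fun v u hc => hr hc.2
      apply Finset.sum_eq_zero; intro u _
      apply Finset.sum_eq_zero; intro v _
      simp [h2 v u]
  · have h2 : ∀ v u : ZMod n, ¬ (q + A = p ∧ v + A = u) := fun v u hc => hp hc.1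
    apply Finset.sum_eq_zero; intro u _
    apply Finset.sum_eq_zero; intro v _
    simp [h2 v u]

lemma proj_eq_s4 (n : ℕ) [NeZero n] (w : ℂ) (a b : ℕ) :
    proj n w a b = (ccoef a b / (n : ℂ)) •
      (Tm n w (a : ZMod n) (2 * (b : ℤ)) + Tm n w (-(a : ZMod n)) (-(2 * (b : ℤ)))) := by
  unfold proj Tm
  simp only [← Finset.sum_add_distrib, neg_mul, sub_eq_add_neg]

/-- the projections `p^α`, `α ∈ S`, are mutually orthogonal. -/
theorem stmt4 (n : ℕ) [NeZero n] (hodd : Odd n) (w : ℂ) (hw : IsPrimitiveRoot w n)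
    (a b c d : ℕ) (hab : (a, b) ∈ idxS n) (hcd : (c, d) ∈ idxS n)
    (hne : (a, b) ≠ (c, d)) :
    proj n w a b * proj n w c d = 0 := by
  simp only [idxS, Finset.mem_filter, Finset.mem_product, Finset.mem_range] at hab hcd
  obtain ⟨⟨han, hbn⟩, hS1⟩ := hab
  obtain ⟨⟨hcn, hdn⟩, hS2⟩ := hcd
  obtain ⟨k, hk⟩ := hodd
  have hak : a ≤ k := by rcases hS1 with h | h | h <;> omega
  have hck : c ≤ k := by rcases hS2 with h | h | h <;> omega
  have hbk : a = 0 → b ≤ k := by rcases hS1 with h | h | h <;> omega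
  have hdk : c = 0 → d ≤ k := by rcases hS2 with h | h | h <;> omega
  -- basic non-divisibility / cast tools
  have ndvd : ∀ m : ℕ, 0 < m → m < n → ¬ n ∣ m := fun m h1 h2 hd =>
    absurd (Nat.le_of_dvd h1 hd) (by omega)
  have cast_inj : ∀ x y : ℕ, x < n → y < n → x ≠ y → (x : ZMod n) ≠ (y : ZMod n) := by
    intro x y hx hy hxy h
    exact hxy (by rw [← ZMod.val_cast_of_lt hx, ← ZMod.val_cast_of_lt hy, h])
  have cast_ne_neg : ∀ x y : ℕ, ¬ n ∣ (x + y) → (x : ZMod n) ≠ -(y : ZMod n) := by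
    intro x y hnd h
    apply hnd
    rw [← ZMod.natCast_eq_zero_iff]
    push_cast
    rw [h]; ring
  have int_ndvd : ∀ x : ℤ, x ≠ 0 → |x| < n → ¬ (n : ℤ) ∣ 2 * x := by
    intro x hx hb hdvd
    have hcop : IsCoprime (n : ℤ) (2 : ℤ) := by
      rw [show ((2 : ℤ)) = ((2 : ℕ) : ℤ) by norm_num, Nat.isCoprime_iff_coprime]
      exact Nat.coprime_two_right.2 ⟨k, hk⟩
    have hdx : (n : ℤ) ∣ x := hcop.dvd_of_dvd_mul_left hdvd
    have habs : (n : ℤ) ∣ |x| := (dvd_abs _ _).2 hdx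
    have := Int.le_of_dvd (abs_pos.2 hx) habs
    linarith
  -- the four building-block products vanish
  have e1 : Tm n w (a : ZMod n) (2 * (b : ℤ)) * Tm n w (c : ZMod n) (2 * (d : ℤ)) = 0 := by
    by_cases hac : a = c
    · subst hac
      have hbd : b ≠ d := fun h => hne (by rw [h])
      apply Tm_mul_same n hw
      have hx : (2 * (d : ℤ) - 2 * (b : ℤ)) = 2 * ((d : ℤ) - (b : ℤ)) := by ring
      rw [hx]
      apply int_ndvd
      · intro h; apply hbd; omega
      · rw [abs_lt]; constructor <;> omega
    · exact Tm_mul_ne n w (cast_inj a c han hcn hac) _ _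
  have e4 : Tm n w (-(a : ZMod n)) (-(2 * (b : ℤ))) *
      Tm n w (-(c : ZMod n)) (-(2 * (d : ℤ))) = 0 := by
    by_cases hac : a = c
    · subst hac
      have hbd : b ≠ d := fun h => hne (by rw [h])
      apply Tm_mul_same n hw
      have hx : (-(2 * (d : ℤ)) - -(2 * (b : ℤ))) = 2 * ((b : ℤ) - (d : ℤ)) := by ring
      rw [hx]
      apply int_ndvd
      · intro h; apply hbd; omega
      · rw [abs_lt]; constructor <;> omega
    · refine Tm_mul_ne n w (fun h => ?_) _ _
      exact cast_inj a c han hcn hac (neg_inj.1 h)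
  have e2 : Tm n w (a : ZMod n) (2 * (b : ℤ)) *
      Tm n w (-(c : ZMod n)) (-(2 * (d : ℤ))) = 0 := by
    by_cases hac0 : a = 0 ∧ c = 0
    · obtain ⟨ha0, hc0⟩ := hac0
      subst ha0; subst hc0
      have hbd : b ≠ d := fun h => hne (by rw [h])
      simp only [Nat.cast_zero, neg_zero]
      apply Tm_mul_same n hw
      have hx : (-(2 * (d : ℤ)) - 2 * (b : ℤ)) = 2 * (-((d : ℤ) + (b : ℤ))) := by ring
      rw [hx]
      have hb' := hbk rfl
      have hd' := hdk rfl
      apply int_ndvd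
      · intro h; apply hbd; omega
      · rw [abs_lt]; constructor <;> omega
    · refine Tm_mul_ne n w (cast_ne_neg a c (ndvd (a + c) ?_ ?_)) _ _
      · omega
      · omega
  have e3 : Tm n w (-(a : ZMod n)) (-(2 * (b : ℤ))) *
      Tm n w (c : ZMod n) (2 * (d : ℤ)) = 0 := by
    by_cases hac0 : a = 0 ∧ c = 0
    · obtain ⟨ha0, hc0⟩ := hac0
      subst ha0; subst hc0
      have hbd : b ≠ d := fun h => hne (by rw [h])
      simp only [Nat.cast_zero, neg_zero]
      apply Tm_mul_same n hw
      have hx : (2 * (d : ℤ) - -(2 * (b : ℤ))) = 2 * ((d : ℤ) + (b : ℤ)) := by ring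
      rw [hx]
      have hb' := hbk rfl
      have hd' := hdk rfl
      apply int_ndvd
      · intro h; apply hbd; omega
      · rw [abs_lt]; constructor <;> omega
    · refine Tm_mul_ne n w (Ne.symm (cast_ne_neg c a (ndvd (c + a) ?_ ?_))) _ _
      · omega
      · omega
  rw [proj_eq_s4 n w a b, proj_eq_s4 n w c d, smul_mul_assoc, mul_smul_comm, smul_smul,
    add_mul, mul_add, mul_add, e1, e2, e3, e4]
  simp
end

section
/- Let m ≥ 2 be even and w a primitive m-th root of unity (in the notation of section 5.2, w is a primitive m-th root of unity after relabeling). Then for all integers a, b, c: ∏_{p=c+1}^{c+m/2} (z + w^{2p-1+b-a})/(1 + z w^{2p-1+b-a}) = (-1)^{a+b+m/2}, for all z ∈ ℂ where the denominators are nonzero. -/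
open Finset

lemma aux_prod (n : ℕ) (hn : 0 < n) {ζ : ℂ} (hζ : IsPrimitiveRoot ζ n) (x y : ℂ) :
    ∏ p ∈ Finset.range n, (x - ζ ^ p * y) = x ^ n - y ^ n := by
  rw [hζ.pow_sub_pow_eq_prod_sub_mul x y hn]
  haveI : NeZero n := ⟨hn.ne'⟩
  refine Finset.prod_nbij (fun p => ζ ^ p) (fun p _ => ?_) ?_ ?_ (fun _ _ => rfl)
  · exact (Polynomial.mem_nthRootsFinset hn (1:ℂ)).2
      (by rw [← pow_mul, mul_comm, pow_mul, hζ.pow_eq_one, one_pow])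
  · intro i hi j hj hij
    exact hζ.injOn_pow (by simpa using hi) (by simpa using hj) hij
  · intro ξ hξ
    obtain ⟨i, hik, rfl⟩ := hζ.eq_pow_of_pow_eq_one ((Polynomial.mem_nthRootsFinset hn (1:ℂ)).1 hξ)
    exact ⟨i, by simpa using hik, rfl⟩

/-- the key identity
`∏_{p=c+1}^{c+m/2} (z + w^{2p-1+b-a})/(1 + z w^{2p-1+b-a}) = (-1)^{a+b+m/2}`
for `w` a primitive `m`-th root of unity, `m` even. -/
theorem stmt10 (m : ℕ) (hm : 2 ≤ m) (heven : Even m) (w : ℂ)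
    (hw : IsPrimitiveRoot w m) (a b c : ℤ) (z : ℂ)
    (hz : ∀ p ∈ Finset.range (m / 2),
      1 + z * w ^ (2 * (c + 1 + (p : ℤ)) - 1 + b - a) ≠ 0) :
    ∏ p ∈ Finset.range (m / 2),
        (z + w ^ (2 * (c + 1 + (p : ℤ)) - 1 + b - a)) /
          (1 + z * w ^ (2 * (c + 1 + (p : ℤ)) - 1 + b - a))
      = (-1 : ℂ) ^ (a + b + ((m / 2 : ℕ) : ℤ)) := by
  obtain ⟨k, hk⟩ := heven
  set n := m / 2 with hn
  have hmn : m = 2 * n := by omega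
  have hn0 : 0 < n := by omega
  have hw0 : w ≠ 0 := hw.ne_zero (by omega)
  have hζ : IsPrimitiveRoot (w ^ 2) n := hw.pow (by omega) hmn
  set e0 : ℤ := 2 * c + 1 + b - a with he0
  set u : ℂ := w ^ e0 with hu
  have hexp : ∀ p : ℕ, w ^ (2 * (c + 1 + (p : ℤ)) - 1 + b - a) = u * (w ^ 2) ^ p := by
    intro p
    have h1 : 2 * (c + 1 + (p : ℤ)) - 1 + b - a = e0 + ((2 * p : ℕ) : ℤ) := by
      push_cast; ring
    rw [h1, zpow_add₀ hw0, zpow_natCast, pow_mul]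
  -- `w ^ n = -1`
  have hwn : w ^ n = -1 := by
    have h1 : (w ^ n) ^ 2 = 1 := by
      rw [← pow_mul, show n * 2 = m by omega, hw.pow_eq_one]
    have h2 : w ^ n ≠ 1 := hw.pow_ne_one_of_pos_of_lt hn0.ne' (by omega)
    have h3 : (w ^ n - 1) * (w ^ n + 1) = 0 := by linear_combination h1
    rcases mul_eq_zero.mp h3 with h | h
    · exact absurd (sub_eq_zero.mp h) h2
    · exact eq_neg_of_add_eq_zero_left h
  -- `u ^ n = (-1) ^ e0`
  have hun : u ^ n = (-1 : ℂ) ^ e0 := by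
    rw [hu, ← zpow_natCast (w ^ e0), ← zpow_mul, mul_comm, zpow_mul, zpow_natCast, hwn]
  set s : ℂ := (-1 : ℂ) ^ (a + b + (n : ℤ)) with hs
  have hneg0 : (-1 : ℂ) ≠ 0 := by norm_num
  have hs2 : s * s = 1 := by
    rw [hs, ← zpow_add₀ hneg0]
    exact Even.neg_one_zpow ⟨a + b + (n : ℤ), by ring⟩
  have hs0 : s ≠ 0 := by
    intro h; rw [h, mul_zero] at hs2; exact one_ne_zero hs2.symm
  -- `(-1)^n * u^n = -s`
  have hkey : (-1 : ℂ) ^ n * u ^ n = -s := by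
    rw [hun, ← zpow_natCast (-1 : ℂ), ← zpow_add₀ hneg0,
      show (n : ℤ) + e0 = (a + b + (n : ℤ)) + (2 * (c - a) + 1) by rw [he0]; ring,
      zpow_add₀ hneg0, Odd.neg_one_zpow ⟨c - a, rfl⟩, hs]
    ring
  simp only [hexp]
  rw [Finset.prod_div_distrib]
  have hnum : ∏ p ∈ range n, (z + u * (w ^ 2) ^ p) = z ^ n + s := by
    have h := aux_prod n hn0 hζ z (-u)
    rw [show ∏ p ∈ range n, (z + u * (w ^ 2) ^ p)
        = ∏ p ∈ range n, (z - (w ^ 2) ^ p * (-u)) from Finset.prod_congr rfl fun p _ => by ring,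
      h, neg_pow]
    rw [show (-1 : ℂ) ^ n * u ^ n = -s from hkey]
    ring
  have hden : ∏ p ∈ range n, (1 + z * (u * (w ^ 2) ^ p)) = s * (z ^ n + s) := by
    have h := aux_prod n hn0 hζ 1 (-(z * u))
    rw [show ∏ p ∈ range n, (1 + z * (u * (w ^ 2) ^ p))
        = ∏ p ∈ range n, (1 - (w ^ 2) ^ p * (-(z * u))) from
        Finset.prod_congr rfl fun p _ => by ring, h, one_pow, neg_pow, mul_pow]
    rw [show (-1 : ℂ) ^ n * (z ^ n * u ^ n) = z ^ n * ((-1 : ℂ) ^ n * u ^ n) by ring, hkey]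
    linear_combination -hs2
  rw [hnum, hden]
  have hD0 : s * (z ^ n + s) ≠ 0 := by
    rw [← hden]
    exact Finset.prod_ne_zero_iff.mpr fun p hp => by
      rw [← hexp p]; exact hz p hp
  rw [div_eq_iff hD0]
  linear_combination (-(z ^ n + s)) * hs2
end

section
/- Let n ≥ 3 be odd and define the matrix 𝓡_n = Σ_{i,j=0}^{n-1} e_{i+j,i-j} ⊗ e_{i,i} on ℂⁿ ⊗ ℂⁿ (indices mod n). Then 𝓡_n satisfies the constant Yang-Baxter equation (𝓡_n)_{12}(𝓡_n)_{13}(𝓡_n)_{23} = (𝓡_n)_{23}(𝓡_n)_{13}(𝓡_n)_{12}. -/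
open Matrix Kronecker Finset

/-- `𝓡_n = Σ_{i,j} e_{i+j,i-j} ⊗ e_{i,i}`. -/
noncomputable def canR (n : ℕ) [NeZero n] : Matrix (ZMod n × ZMod n) (ZMod n × ZMod n) ℂ :=
  ∑ i : ZMod n, ∑ j : ZMod n, EM n (i + j) (i - j) ⊗ₖ EM n i i

lemma canR_apply (n : ℕ) [NeZero n] (a b c d : ZMod n) :
    canR n (a, b) (c, d) = if d = b ∧ c = 2 * b - a then 1 else 0 := by
  classical
  have hf : ∀ i j : ZMod n,
      (EM n (i + j) (i - j) ⊗ₖ EM n i i) (a, b) (c, d)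
        = (if i + j = a ∧ i - j = c then 1 else 0) *
            (if i = b ∧ i = d then (1 : ℂ) else 0) := by
    intro i j
    simp [EM, Matrix.single, Matrix.kroneckerMap_apply, ite_and]
  simp only [canR, Matrix.sum_apply]
  rw [Finset.sum_eq_single b]
  · rw [Finset.sum_eq_single (a - b)]
    · rw [hf]
      have h1 : b + (a - b) = a := by ring
      have h2 : b - (a - b) = 2 * b - a := by ring
      rw [h1, h2]
      by_cases hd : d = b
      · by_cases hc : c = 2 * b - a
        · simp [hd, hc]
        · have hc' : ¬(2 * b - a = c) := fun h => hc h.symm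
          simp [hc, hc']
      · have hd' : ¬(b = d) := fun h => hd h.symm
        simp [hd, hd']
    · intro j _ hj
      rw [hf]
      have : ¬(b + j = a ∧ b - j = c) := by
        rintro ⟨h1, -⟩
        exact hj (by rw [← h1]; ring)
      simp [this]
    · simp
  · intro i _ hi
    apply Finset.sum_eq_zero
    intro j _
    rw [hf]
    simp [hi]
  · simp

variable {n : ℕ} [NeZero n]

/-- the permutation on the triple underlying `(canR n)₁₂`. -/
def e12 (n : ℕ) [NeZero n] : Equiv.Perm (ZMod n × ZMod n × ZMod n) :=
  Function.Involutive.toPerm (fun p => (2 * p.2.1 - p.1, p.2.1, p.2.2)) (by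
    rintro ⟨a, b, c⟩
    have h : 2 * b - (2 * b - a) = a := by ring
    simp [h])

def e13 (n : ℕ) [NeZero n] : Equiv.Perm (ZMod n × ZMod n × ZMod n) :=
  Function.Involutive.toPerm (fun p => (2 * p.2.2 - p.1, p.2.1, p.2.2)) (by
    rintro ⟨a, b, c⟩
    have h : 2 * c - (2 * c - a) = a := by ring
    simp [h])

def e23 (n : ℕ) [NeZero n] : Equiv.Perm (ZMod n × ZMod n × ZMod n) :=
  Function.Involutive.toPerm (fun p => (p.1, 2 * p.2.2 - p.2.1, p.2.2)) (by
    rintro ⟨a, b, c⟩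
    have h : 2 * c - (2 * c - b) = b := by ring
    simp [h])

lemma act12_canR : act12 (canR n) = ((e12 n).toPEquiv).toMatrix := by
  ext ⟨a, b, c⟩ ⟨x, y, z⟩
  simp only [act12, Matrix.of_apply, canR_apply, PEquiv.toMatrix_apply,
    Equiv.toPEquiv_apply, Option.mem_def, Option.some.injEq, e12,
    Function.Involutive.coe_toPerm, Function.Involutive.toPerm, Equiv.coe_fn_mk, Prod.mk.injEq]
  rw [ite_zero_mul_ite_zero, mul_one]
  refine if_congr ?_ rfl rfl
  constructor
  · rintro ⟨⟨h1, h2⟩, h3⟩; exact ⟨h2.symm, h1.symm, h3⟩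
  · rintro ⟨h1, h2, h3⟩; exact ⟨⟨h2.symm, h1.symm⟩, h3⟩

lemma act13_canR : act13 (canR n) = ((e13 n).toPEquiv).toMatrix := by
  ext ⟨a, b, c⟩ ⟨x, y, z⟩
  simp only [act13, Matrix.of_apply, canR_apply, PEquiv.toMatrix_apply,
    Equiv.toPEquiv_apply, Option.mem_def, Option.some.injEq, e13,
    Function.Involutive.coe_toPerm, Function.Involutive.toPerm, Equiv.coe_fn_mk, Prod.mk.injEq]
  rw [ite_zero_mul_ite_zero, mul_one]
  refine if_congr ?_ rfl rfl
  constructor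
  · rintro ⟨⟨h1, h2⟩, h3⟩; exact ⟨h2.symm, h3, h1.symm⟩
  · rintro ⟨h1, h2, h3⟩; exact ⟨⟨h3.symm, h1.symm⟩, h2⟩

lemma act23_canR : act23 (canR n) = ((e23 n).toPEquiv).toMatrix := by
  ext ⟨a, b, c⟩ ⟨x, y, z⟩
  simp only [act23, Matrix.of_apply, canR_apply, PEquiv.toMatrix_apply,
    Equiv.toPEquiv_apply, Option.mem_def, Option.some.injEq, e23,
    Function.Involutive.coe_toPerm, Function.Involutive.toPerm, Equiv.coe_fn_mk, Prod.mk.injEq]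
  rw [ite_zero_mul_ite_zero, mul_one]
  refine if_congr ?_ rfl rfl
  constructor
  · rintro ⟨⟨h1, h2⟩, h3⟩; exact ⟨h3, h2.symm, h1.symm⟩
  · rintro ⟨h1, h2, h3⟩; exact ⟨⟨h3.symm, h2.symm⟩, h1⟩

/-- `𝓡_n` satisfies the constant Yang–Baxter equation. -/
theorem stmt14 (n : ℕ) [NeZero n] (hn : 3 ≤ n) (hodd : Odd n) :
    act12 (canR n) * act13 (canR n) * act23 (canR n)
      = act23 (canR n) * act13 (canR n) * act12 (canR n) := by
  classical
  rw [act12_canR, act13_canR, act23_canR]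
  rw [← PEquiv.toMatrix_trans, ← PEquiv.toMatrix_trans,
    ← PEquiv.toMatrix_trans, ← PEquiv.toMatrix_trans,
    ← Equiv.toPEquiv_trans, ← Equiv.toPEquiv_trans,
    ← Equiv.toPEquiv_trans, ← Equiv.toPEquiv_trans]
  have key : ((e12 n).trans (e13 n)).trans (e23 n) = ((e23 n).trans (e13 n)).trans (e12 n) := by
    apply Equiv.ext
    rintro ⟨a, b, c⟩
    simp only [Equiv.trans_apply, e12, e13, e23, Function.Involutive.coe_toPerm, Function.Involutive.toPerm, Equiv.coe_fn_mk]
    refine Prod.ext ?_ (Prod.ext ?_ rfl) <;> simp <;> ring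
  rw [key]
end

section
/- Let n ≥ 3 be odd, w a primitive n-th root of unity. The Yang-Baxter equation for R(z) = Σ_{i,j,a=0}^{n-1} g_{(a,j)}(z) e_{i+j,i+a} ⊗ e_{i+a+j,i} is equivalent to the scalar functional equations: for all 0 ≤ a,b,c,d ≤ n-1 and generic x, y, Σ_{k=0}^{n-1} g_{(a,k-d)}(x) g_{(k,a-b)}(xy) g_{(b,c-k)}(y) = Σ_{k=0}^{n-1} g_{(c,k-b)}(x) g_{(k,c-d)}(xy) g_{(d,a-k)}(y). -/
open Matrix Kronecker Finset

/-- `g_{(a,j)}(z)`. -/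
noncomputable def gfun (n : ℕ) (w : ℂ) (a : ℕ) (j : ℤ) (z : ℂ) : ℂ :=
  (1 / (n : ℂ)) * ∑ b ∈ Finset.range n, w ^ (2 * (b : ℤ) * j) *
    ∏ p ∈ Finset.range a,
      (z + w ^ (2 * (2 * ((p : ℤ) + 1) - 1 + (b : ℤ) - (a : ℤ)))) /
        (1 + z * w ^ (2 * (2 * ((p : ℤ) + 1) - 1 + (b : ℤ) - (a : ℤ))))

/-- `R(z) = Σ_{i,j,a} g_{(a,j)}(z) e_{i+j,i+a} ⊗ e_{i+a+j,i}`. -/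
noncomputable def Rmat (n : ℕ) [NeZero n] (w z : ℂ) :
    Matrix (ZMod n × ZMod n) (ZMod n × ZMod n) ℂ :=
  ∑ i : ZMod n, ∑ j ∈ Finset.range n, ∑ a ∈ Finset.range n,
    gfun n w a (j : ℤ) z •
      (EM n (i + (j : ZMod n)) (i + (a : ZMod n)) ⊗ₖ EM n (i + (a : ZMod n) + (j : ZMod n)) i)

noncomputable def G (n : ℕ) [NeZero n] (w : ℂ) (a j : ZMod n) (z : ℂ) : ℂ :=
  gfun n w a.val (j.val : ℤ) z

lemma gfun_congr {n : ℕ} [NeZero n] {w : ℂ} (hw1 : w ^ n = 1) (hw0 : w ≠ 0) (a : ℕ) {j j' : ℤ}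
    (h : (j : ZMod n) = (j' : ZMod n)) (z : ℂ) : gfun n w a j z = gfun n w a j' z := by
  obtain ⟨t, ht⟩ : (n : ℤ) ∣ j - j' := ((ZMod.intCast_eq_intCast_iff _ _ _).1 h).symm.dvd
  have hj : j = j' + n * t := by linarith
  unfold gfun
  congr 1
  refine Finset.sum_congr rfl fun b _ => ?_
  congr 1
  have h1 : w ^ ((n:ℤ) * (2 * (b:ℤ) * t)) = 1 := by
    rw [_root_.zpow_mul, zpow_natCast, hw1, _root_.one_zpow]
  rw [hj, show 2 * (b:ℤ) * (j' + n * t) = 2 * b * j' + (n:ℤ) * (2 * b * t) by ring,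
    zpow_add₀ hw0, h1, mul_one]

lemma gfun_eq_G {n : ℕ} [NeZero n] {w : ℂ} (hw1 : w ^ n = 1) (hw0 : w ≠ 0) {a : ℕ} (ha : a < n)
    (j : ℤ) (z : ℂ) : gfun n w a j z = G n w (a : ZMod n) ((j : ZMod n)) z := by
  unfold G
  rw [ZMod.val_cast_of_lt ha]
  refine gfun_congr hw1 hw0 a ?_ z
  simp [ZMod.natCast_val, ZMod.intCast_cast, ZMod.cast_id]

lemma sum_range_zmod {n : ℕ} [NeZero n] {M : Type*} [AddCommMonoid M] (f : ZMod n → M) :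
    ∑ j ∈ Finset.range n, f (j : ZMod n) = ∑ j : ZMod n, f j := by
  refine Finset.sum_nbij' (fun j => (j : ZMod n)) (fun a => a.val) (by simp) (by simp [ZMod.val_lt])
    (fun j hj => by simp [ZMod.val_cast_of_lt (Finset.mem_range.1 hj)])
    (fun a _ => by simp [ZMod.natCast_val, ZMod.cast_id]) (fun _ _ => rfl)

lemma Rmat_eq {n : ℕ} [NeZero n] {w : ℂ} (hw1 : w ^ n = 1) (hw0 : w ≠ 0) (z : ℂ) :
    Rmat n w z = ∑ i : ZMod n, ∑ j : ZMod n, ∑ a : ZMod n,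
      G n w a j z • (EM n (i + j) (i + a) ⊗ₖ EM n (i + a + j) i) := by
  unfold Rmat
  refine Finset.sum_congr rfl fun i _ => ?_
  rw [← sum_range_zmod (n := n)
    (f := fun j => ∑ a : ZMod n, G n w a j z • (EM n (i + j) (i + a) ⊗ₖ EM n (i + a + j) i))]
  refine Finset.sum_congr rfl fun j hj => ?_
  rw [← sum_range_zmod (n := n)
    (f := fun a => G n w a (j : ZMod n) z • (EM n (i + j) (i + a) ⊗ₖ EM n (i + a + j) i))]
  refine Finset.sum_congr rfl fun a ha => ?_
  rw [gfun_eq_G hw1 hw0 (Finset.mem_range.1 ha)]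
  norm_cast

-- entry lemma, s'-solved form

lemma Rmat_apply₁ {n : ℕ} [NeZero n] {w : ℂ} (hw1 : w ^ n = 1) (hw0 : w ≠ 0) (z : ℂ)
    (r s r' s' : ZMod n) :
    Rmat n w z (r, s) (r', s') =
      if s' = r + r' - s then G n w (r' - s') (r - s') z else 0 := by
  rw [Rmat_eq hw1 hw0]
  simp only [Matrix.sum_apply, Matrix.smul_apply, EM, Matrix.kroneckerMap_apply,
    Matrix.single, Matrix.of_apply, smul_eq_mul, mul_ite, ite_mul, mul_one, one_mul,
    mul_zero, zero_mul, ite_and]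
  rw [Fintype.sum_eq_single s' (fun x hx => Finset.sum_eq_zero fun x1 _ =>
    Finset.sum_eq_zero fun x2 _ => by simp [hx])]
  rw [Fintype.sum_eq_single (r - s') (fun x1 hx1 => Finset.sum_eq_zero fun x2 _ => by
    have h2 : ¬(s' + x1 = r) := fun h => hx1 (by linear_combination h)
    simp [h2])]
  rw [Fintype.sum_eq_single (r' - s') (fun x2 hx2 => by
    have h2 : ¬(s' + x2 = r') := fun h => hx2 (by linear_combination h)
    simp [h2])]
  have e1 : s' + (r - s') = r := by ring
  have e2 : s' + (r' - s') = r' := by ring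
  simp only [e1, e2, if_pos rfl]
  have hc : (r' + (r - s') = s) ↔ (s' = r + r' - s) := by
    constructor <;> intro h <;> linear_combination -h
  simp only [if_true]
  rw [if_congr hc rfl rfl]

lemma Rmat_apply₂ {n : ℕ} [NeZero n] {w : ℂ} (hw1 : w ^ n = 1) (hw0 : w ≠ 0) (z : ℂ)
    (r s r' s' : ZMod n) :
    Rmat n w z (r, s) (r', s') =
      if r' = s + s' - r then G n w (r' - s') (r - s') z else 0 := by
  rw [Rmat_apply₁ hw1 hw0]
  exact if_congr (by constructor <;> intro h <;> linear_combination -h) rfl rfl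

lemma tripleL {n : ℕ} [NeZero n] {w : ℂ} (hw1 : w ^ n = 1) (hw0 : w ≠ 0) (x y : ℂ)
    (u1 u2 u3 v1 v2 v3 : ZMod n) :
    ((act12 (Rmat n w x) * act13 (Rmat n w (x * y)) * act23 (Rmat n w y) :
        Matrix (ZMod n × ZMod n × ZMod n) (ZMod n × ZMod n × ZMod n) ℂ))
        (u1, u2, u3) (v1, v2, v3)
      = if u1 + u3 + v2 = u2 + v1 + v3 then
          ∑ m : ZMod n, G n w (u2 - u1) (u2 - m) x * G n w (u3 - m) (u3 - v1) (x * y)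
            * G n w (v2 - v3) (u1 + m - u2 - v3) y
        else 0 := by
  simp only [Matrix.mul_apply, act12, act13, act23, Matrix.of_apply,
    Rmat_apply₁ hw1 hw0, Fintype.sum_prod_type, mul_ite, ite_mul, mul_one, one_mul,
    mul_zero, zero_mul, Finset.sum_ite_irrel, Finset.sum_ite_eq, Finset.sum_ite_eq',
    Finset.mem_univ, if_true, Finset.sum_const_zero]
  calc (∑ p : ZMod n, ∑ q : ZMod n,
        if v3 = p + v2 - q then
          (∑ m : ZMod n, ∑ l : ZMod n,
            if q = m + v1 - l then
              if u3 = l then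
                if p = u1 + m - u2 then
                  G n w (m - p) (u1 - p) x * G n w (v1 - q) (m - q) (x * y)
                else 0
              else 0
            else 0) * G n w (v2 - v3) (p - v3) y
        else 0)
      = ∑ p : ZMod n, ∑ q : ZMod n,
        if v3 = p + v2 - q then
          (∑ m : ZMod n,
            if q = m + v1 - u3 then
              if p = u1 + m - u2 then
                G n w (m - p) (u1 - p) x * G n w (v1 - q) (m - q) (x * y)
              else 0
            else 0) * G n w (v2 - v3) (p - v3) y
        else 0 := by
        refine Finset.sum_congr rfl fun p _ => Finset.sum_congr rfl fun q _ =>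
          if_congr Iff.rfl ?_ rfl
        congr 1
        refine Finset.sum_congr rfl fun m _ => ?_
        exact (Fintype.sum_eq_single u3 (fun l hl => by simp [Ne.symm hl])).trans (by simp)
    _ = ∑ p : ZMod n,
          (∑ m : ZMod n,
            if p + v2 - v3 = m + v1 - u3 then
              if p = u1 + m - u2 then
                G n w (m - p) (u1 - p) x
                  * G n w (v1 - (p + v2 - v3)) (m - (p + v2 - v3)) (x * y)
              else 0
            else 0) * G n w (v2 - v3) (p - v3) y := by
        refine Finset.sum_congr rfl fun p _ => ?_
        refine (Fintype.sum_eq_single (p + v2 - v3) (fun q hq => ?_)).trans ?_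
        · have hne : ¬(v3 = p + v2 - q) := fun h => hq (by linear_combination h)
          simp [hne]
        · rw [if_pos (show v3 = p + v2 - (p + v2 - v3) by ring)]
    _ = ∑ p : ZMod n,
          (if p + v2 - v3 = p + u2 - u1 + v1 - u3 then
              G n w (p + u2 - u1 - p) (u1 - p) x
                * G n w (v1 - (p + v2 - v3)) (p + u2 - u1 - (p + v2 - v3)) (x * y)
            else 0) * G n w (v2 - v3) (p - v3) y := by
        refine Finset.sum_congr rfl fun p _ => ?_
        congr 1
        refine (Fintype.sum_eq_single (p + u2 - u1) (fun m hm => ?_)).trans ?_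
        · have hne : ¬(p = u1 + m - u2) := fun h => hm (by linear_combination -h)
          simp [hne]
        · rw [if_pos (show p = u1 + (p + u2 - u1) - u2 by ring)]
    _ = if u1 + u3 + v2 = u2 + v1 + v3 then
          ∑ m : ZMod n, G n w (u2 - u1) (u2 - m) x * G n w (u3 - m) (u3 - v1) (x * y)
            * G n w (v2 - v3) (u1 + m - u2 - v3) y
        else 0 := by
        by_cases hP : u1 + u3 + v2 = u2 + v1 + v3
        · rw [if_pos hP]
          rw [Finset.sum_congr rfl (fun p _ => by
            rw [if_pos (show p + v2 - v3 = p + u2 - u1 + v1 - u3 by linear_combination hP)])]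
          have Gc : ∀ (a a' b b' : ZMod n) (z : ℂ), a = a' → b = b' →
              G n w a b z = G n w a' b' z := fun a a' b b' z h1 h2 => by rw [h1, h2]
          refine Fintype.sum_equiv (Equiv.addRight (u2 - u1)) _ _ fun p => ?_
          simp only [Equiv.coe_addRight]
          exact congrArg₂ (· * ·) (congrArg₂ (· * ·)
            (Gc _ _ _ _ _ (by ring) (by ring))
            (Gc _ _ _ _ _ (by linear_combination -hP) (by linear_combination -hP)))
            (Gc _ _ _ _ _ rfl (by ring))
        · rw [if_neg hP]
          refine Finset.sum_eq_zero fun p _ => ?_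
          have hne : ¬(p + v2 - v3 = p + u2 - u1 + v1 - u3) := fun h => hP (by
            linear_combination h)
          simp [hne]

lemma tripleR {n : ℕ} [NeZero n] {w : ℂ} (hw1 : w ^ n = 1) (hw0 : w ≠ 0) (x y : ℂ)
    (u1 u2 u3 v1 v2 v3 : ZMod n) :
    ((act23 (Rmat n w y) * act13 (Rmat n w (x * y)) * act12 (Rmat n w x) :
        Matrix (ZMod n × ZMod n × ZMod n) (ZMod n × ZMod n × ZMod n) ℂ))
        (u1, u2, u3) (v1, v2, v3)
      = if u1 + u3 + v2 = u2 + v1 + v3 then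
          ∑ m : ZMod n, G n w (u3 - u2) (u2 - m) y * G n w (m - u1) (u1 - v3) (x * y)
            * G n w (v1 - v2) (m + v3 - u1 - v2) x
        else 0 := by
  simp only [Matrix.mul_apply, act12, act13, act23, Matrix.of_apply,
    Rmat_apply₂ hw1 hw0, Fintype.sum_prod_type, mul_ite, ite_mul, mul_one, one_mul,
    mul_zero, zero_mul, Finset.sum_ite_irrel, Finset.sum_ite_eq, Finset.sum_ite_eq',
    Finset.mem_univ, if_true, Finset.sum_const_zero]
  calc (∑ p : ZMod n, ∑ q : ZMod n,
        if v1 = q + v2 - p then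
          (∑ l : ZMod n, ∑ m : ZMod n,
            if p = m + v3 - l then
              if u1 = l then
                if q = u3 + m - u2 then
                  G n w (q - m) (u2 - m) y * G n w (p - v3) (l - v3) (x * y)
                else 0
              else 0
            else 0) * G n w (v1 - v2) (p - v2) x
        else 0)
      = ∑ p : ZMod n, ∑ q : ZMod n,
        if v1 = q + v2 - p then
          (∑ m : ZMod n,
            if p = m + v3 - u1 then
              if q = u3 + m - u2 then
                G n w (q - m) (u2 - m) y * G n w (p - v3) (u1 - v3) (x * y)
              else 0
            else 0) * G n w (v1 - v2) (p - v2) x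
        else 0 := by
        refine Finset.sum_congr rfl fun p _ => Finset.sum_congr rfl fun q _ =>
          if_congr Iff.rfl ?_ rfl
        congr 1
        refine (Fintype.sum_eq_single u1 (fun l hl =>
          Finset.sum_eq_zero fun m _ => by simp [Ne.symm hl])).trans ?_
        exact Finset.sum_congr rfl fun m _ => by simp
    _ = ∑ p : ZMod n,
          (∑ m : ZMod n,
            if p = m + v3 - u1 then
              if v1 + p - v2 = u3 + m - u2 then
                G n w (v1 + p - v2 - m) (u2 - m) y * G n w (p - v3) (u1 - v3) (x * y)
              else 0
            else 0) * G n w (v1 - v2) (p - v2) x := by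
        refine Finset.sum_congr rfl fun p _ => ?_
        refine (Fintype.sum_eq_single (v1 + p - v2) (fun q hq => ?_)).trans ?_
        · have hne : ¬(v1 = q + v2 - p) := fun h => hq (by linear_combination -h)
          simp [hne]
        · rw [if_pos (show v1 = v1 + p - v2 + v2 - p by ring)]
    _ = ∑ p : ZMod n,
          (if v1 + p - v2 = u3 + (p + u1 - v3) - u2 then
              G n w (v1 + p - v2 - (p + u1 - v3)) (u2 - (p + u1 - v3)) y
                * G n w (p - v3) (u1 - v3) (x * y)
            else 0) * G n w (v1 - v2) (p - v2) x := by
        refine Finset.sum_congr rfl fun p _ => ?_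
        congr 1
        refine (Fintype.sum_eq_single (p + u1 - v3) (fun m hm => ?_)).trans ?_
        · have hne : ¬(p = m + v3 - u1) := fun h => hm (by linear_combination -h)
          simp [hne]
        · rw [if_pos (show p = p + u1 - v3 + v3 - u1 by ring)]
    _ = if u1 + u3 + v2 = u2 + v1 + v3 then
          ∑ m : ZMod n, G n w (u3 - u2) (u2 - m) y * G n w (m - u1) (u1 - v3) (x * y)
            * G n w (v1 - v2) (m + v3 - u1 - v2) x
        else 0 := by
        by_cases hP : u1 + u3 + v2 = u2 + v1 + v3
        · rw [if_pos hP]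
          rw [Finset.sum_congr rfl (fun p _ => by
            rw [if_pos (show v1 + p - v2 = u3 + (p + u1 - v3) - u2 by linear_combination -hP)])]
          have Gc : ∀ (a a' b b' : ZMod n) (z : ℂ), a = a' → b = b' →
              G n w a b z = G n w a' b' z := fun a a' b b' z h1 h2 => by rw [h1, h2]
          refine Fintype.sum_equiv (Equiv.addRight (u1 - v3)) _ _ fun p => ?_
          simp only [Equiv.coe_addRight]
          exact congrArg₂ (· * ·) (congrArg₂ (· * ·)
            (Gc _ _ _ _ _ (by linear_combination -hP) (by ring))
            (Gc _ _ _ _ _ (by ring) rfl))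
            (Gc _ _ _ _ _ rfl (by ring))
        · rw [if_neg hP]
          refine Finset.sum_eq_zero fun p _ => ?_
          have hne : ¬(v1 + p - v2 = u3 + (p + u1 - v3) - u2) := fun h => hP (by
            linear_combination -h)
          simp [hne]

lemma G_congr {n : ℕ} [NeZero n] {w : ℂ} {a a' b b' : ZMod n} (h1 : a = a') (h2 : b = b')
    (z : ℂ) : G n w a b z = G n w a' b' z := by rw [h1, h2]

lemma sumG {n : ℕ} [NeZero n] {w : ℂ} (hw1 : w ^ n = 1) (hw0 : w ≠ 0) {A B : ℕ}
    (hA : A < n) (hB : B < n) (C D : ℕ) (E : ℤ) (x' z' y' : ℂ) :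
    ∑ k ∈ Finset.range n, gfun n w A ((k : ℤ) - (D : ℤ)) x' * gfun n w k E z'
        * gfun n w B ((C : ℤ) - (k : ℤ)) y'
      = ∑ k : ZMod n, G n w (A : ZMod n) (k - (D : ZMod n)) x' * G n w k ((E : ℤ) : ZMod n) z'
        * G n w (B : ZMod n) ((C : ZMod n) - k) y' := by
  rw [← sum_range_zmod (n := n) (f := fun k => G n w (A : ZMod n) (k - (D : ZMod n)) x'
    * G n w k ((E : ℤ) : ZMod n) z' * G n w (B : ZMod n) ((C : ZMod n) - k) y')]
  refine Finset.sum_congr rfl fun k hk => ?_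
  rw [gfun_eq_G hw1 hw0 hA, gfun_eq_G hw1 hw0 (Finset.mem_range.1 hk),
    gfun_eq_G hw1 hw0 hB]
  exact congrArg₂ (· * ·) (congrArg₂ (· * ·)
    (G_congr rfl (by push_cast; ring) x') (G_congr (by push_cast; ring) rfl z'))
    (G_congr rfl (by push_cast; ring) y')

/-- the Yang–Baxter equation for `R(z)` is equivalent to the scalar
functional equations
`Σ_k g_{(a,k-d)}(x) g_{(k,a-b)}(xy) g_{(b,c-k)}(y) = Σ_k g_{(c,k-b)}(x) g_{(k,c-d)}(xy) g_{(d,a-k)}(y)`. -/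
theorem stmt16 (n : ℕ) [NeZero n] (hn : 3 ≤ n) (hodd : Odd n)
    (w : ℂ) (hw : IsPrimitiveRoot w n) (x y : ℂ) :
    (act12 (Rmat n w x) * act13 (Rmat n w (x * y)) * act23 (Rmat n w y)
        = act23 (Rmat n w y) * act13 (Rmat n w (x * y)) * act12 (Rmat n w x))
      ↔ (∀ a ∈ Finset.range n, ∀ b ∈ Finset.range n, ∀ c ∈ Finset.range n,
          ∀ d ∈ Finset.range n,
          ∑ k ∈ Finset.range n,
              gfun n w a ((k : ℤ) - d) x * gfun n w k ((a : ℤ) - b) (x * y)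
                * gfun n w b ((c : ℤ) - k) y
            = ∑ k ∈ Finset.range n,
              gfun n w c ((k : ℤ) - b) x * gfun n w k ((c : ℤ) - d) (x * y)
                * gfun n w d ((a : ℤ) - k) y) := by
  have hw1 : w ^ n = 1 := hw.pow_eq_one
  have hw0 : w ≠ 0 := hw.ne_zero (NeZero.ne n)
  constructor
  · intro h a ha b hb c hc d hd
    rw [sumG hw1 hw0 (Finset.mem_range.1 ha) (Finset.mem_range.1 hb) c d _ x (x*y) y,
      sumG hw1 hw0 (Finset.mem_range.1 hc) (Finset.mem_range.1 hd) a b _ x (x*y) y]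
    push_cast
    set A := ((a : ℕ) : ZMod n); set B := ((b : ℕ) : ZMod n)
    set C := ((c : ℕ) : ZMod n); set D := ((d : ℕ) : ZMod n)
    have h' := Matrix.ext_iff.mpr h ((0 : ZMod n), A, A + D) (B + D, B + D - C, D - C)
    rw [tripleL hw1 hw0, tripleR hw1 hw0, if_pos (by ring), if_pos (by ring)] at h'
    refine Eq.trans ?_ (h'.trans ?_)
    · refine Fintype.sum_equiv (Equiv.subLeft (A + D)) _ _ fun k => ?_
      simp only [Equiv.subLeft_apply]
      exact congrArg₂ (· * ·) (congrArg₂ (· * ·)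
        (G_congr (by ring) (by ring) x)
        (G_congr (by ring) (by ring) (x*y)))
        (G_congr (by ring) (by ring) y)
    · refine Finset.sum_congr rfl fun m _ => ?_
      refine Eq.trans (congrArg₂ (· * ·) (congrArg₂ (· * ·)
        (G_congr (show A + D - A = D by ring) (show A - m = A - m from rfl) y)
        (G_congr (show m - 0 = m by ring) (show (0 : ZMod n) - (D - C) = C - D by ring) (x*y)))
        (G_congr (show B + D - (B + D - C) = C by ring)
          (show m + (D - C) - 0 - (B + D - C) = m - B by ring) x)) ?_
      ring
  · intro h
    ext ⟨u1, u2, u3⟩ ⟨v1, v2, v3⟩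
    rw [tripleL hw1 hw0, tripleR hw1 hw0]
    by_cases hP : u1 + u3 + v2 = u2 + v1 + v3
    · rw [if_pos hP, if_pos hP]
      have hs := h (u2 - u1).val (Finset.mem_range.2 (ZMod.val_lt _))
        (v2 - v3).val (Finset.mem_range.2 (ZMod.val_lt _))
        (v1 - v2).val (Finset.mem_range.2 (ZMod.val_lt _))
        (u3 - u2).val (Finset.mem_range.2 (ZMod.val_lt _))
      rw [sumG hw1 hw0 (ZMod.val_lt _) (ZMod.val_lt _), sumG hw1 hw0 (ZMod.val_lt _)
        (ZMod.val_lt _)] at hs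
      push_cast at hs
      simp only [ZMod.natCast_val, ZMod.cast_id] at hs
      refine Eq.trans ?_ (hs.trans ?_)
      · refine Fintype.sum_equiv (Equiv.subLeft u3) _ _ fun m => ?_
        simp only [Equiv.subLeft_apply]
        exact congrArg₂ (· * ·) (congrArg₂ (· * ·)
          (G_congr rfl (by ring) x)
          (G_congr rfl (by linear_combination hP) (x*y)))
          (G_congr rfl (by linear_combination hP) y)
      · refine Fintype.sum_equiv (Equiv.addRight u1) _ _ fun k => ?_
        simp only [Equiv.coe_addRight]
        trans (G n w (v1 - v2) (k + u1 + v3 - u1 - v2) x * G n w (k + u1 - u1) (u1 - v3) (x*y)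
          * G n w (u3 - u2) (u2 - (k + u1)) y)
        · exact congrArg₂ (· * ·) (congrArg₂ (· * ·)
            (G_congr rfl (by ring) x)
            (G_congr (by ring) (by linear_combination -hP) (x*y)))
            (G_congr rfl (by ring) y)
        · ring
    · rw [if_neg hP, if_neg hP]
end
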